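/- arXiv:2212.09429 — 9 statements merged into one kernel-verified Lean document; each statement's English description precedes it below -/
import Mathlib

section
/- Let ℱ_uns be the class of ALL reward functions f : 𝒳 × 𝒜 → ℝ, and let f be a reward function with a unique optimal arm in every context. Then C(f, ℱ_uns) = Σ_{x∈𝒳} Σ_{a ≠ π*_f(x)} 2/Δ_f(x,a). -/
open scoped ENNReal

/-- The instance-dependent complexity `C(f, ℱ)`: infimum over nonnegative
allocations `η` of the regret `∑ η(x,a) Δ_f(x,a)` subject to the information
constraint `∑ η(x,a) (1/2)(f(x,a) - f'(x,a))² ≥ 1` for every alternative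
`f' ∈ Λ(f, ℱ)`. The value is `⊤` when no feasible allocation exists.
Here `π` is the (unique) optimal policy of `f`. -/
noncomputable def Complexity {X A : Type*} [Fintype X] [Fintype A]
    (f : X → A → ℝ) (π : X → A) (F : Set (X → A → ℝ)) : ℝ≥0∞ :=
  sInf { c : ℝ≥0∞ | ∃ η : X → A → ℝ,
    (∀ x a, 0 ≤ η x a) ∧
    (∀ f' ∈ F, (∃ x, ∃ a, a ≠ π x ∧ f' x (π x) < f' x a) →
      1 ≤ ∑ x, ∑ a, η x a * (1 / 2 * (f x a - f' x a) ^ 2)) ∧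
    c = ENNReal.ofReal (∑ x, ∑ a, η x a * (f x (π x) - f x a)) }

/-- `π x` is the unique optimal arm of `f` in every context `x`. -/
def UniqueOpt {X A : Type*} (f : X → A → ℝ) (π : X → A) : Prop :=
  ∀ x a, a ≠ π x → f x a < f x (π x)

/-- The class of reward functions that are linear in the representation `φ`. -/
def linClass {X A κ : Type*} [Fintype κ] (φ : X → A → κ → ℝ) :
    Set (X → A → ℝ) :=
  { f | ∃ θ : κ → ℝ, ∀ x a, f x a = ∑ j, φ x a j * θ j }

/-- The complexity of the unstructured class (all reward functions) is the
sum of inverse gaps `∑_x ∑_{a ≠ π x} 2 / Δ_f(x,a)`. -/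
theorem complexity_unstructured {X A : Type*} [Fintype X] [Fintype A] [DecidableEq A]
    [Nonempty X] [Nonempty A]
    (f : X → A → ℝ) (π : X → A) (hπ : UniqueOpt f π) :
    Complexity f π (Set.univ : Set (X → A → ℝ)) =
      ENNReal.ofReal (∑ x, ∑ a ∈ Finset.univ.filter (fun a => a ≠ π x),
        2 / (f x (π x) - f x a)) := by
  classical
  set S := ∑ x, ∑ a ∈ Finset.univ.filter (fun a => a ≠ π x),
      2 / (f x (π x) - f x a) with hSdef
  have hΔ : ∀ x a, a ≠ π x → 0 < f x (π x) - f x a := fun x a h => sub_pos.2 (hπ x a h)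
  have hS0 : 0 ≤ S := Finset.sum_nonneg fun x _ => Finset.sum_nonneg fun a ha => by
    have := hΔ x a (Finset.mem_filter.1 ha).2
    positivity
  have key : ∀ t : ℝ, 0 < t →
      Complexity f π (Set.univ : Set (X → A → ℝ)) ≤ ENNReal.ofReal ((1 + t) * S) := by
    intro t ht
    set η : X → A → ℝ := fun x a => if a = π x then
        ∑ b ∈ Finset.univ.filter (fun b => b ≠ π x),
          2 * (1 + t) / (t * (f x (π x) - f x b) ^ 2)
      else (1 + t) * (2 / (f x (π x) - f x a) ^ 2) with hηdef
    have hηnn : ∀ x a, 0 ≤ η x a := by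
      intro x a
      simp only [hηdef]
      split
      · refine Finset.sum_nonneg fun b hb => ?_
        have := hΔ x b (Finset.mem_filter.1 hb).2
        positivity
      · next h =>
        have := hΔ x a h
        positivity
    apply sInf_le
    refine ⟨η, hηnn, ?_, ?_⟩
    · -- feasibility
      rintro f' - ⟨x, a, ha, hlt⟩
      set Δ := f x (π x) - f x a with hΔdef
      have hΔpos : 0 < Δ := hΔ x a ha
      set u := f' x a - f x a with hudef
      set v := f x (π x) - f' x (π x) with hvdef
      have huv : Δ < u + v := by
        simp only [hudef, hvdef, hΔdef]
        linarith
      set g : A → ℝ := fun b => η x b * (1 / 2 * (f x b - f' x b) ^ 2) with hgdef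
      have hga : g a = (1 + t) * (2 / Δ ^ 2) * (1 / 2 * u ^ 2) := by
        simp only [hgdef, hηdef, if_neg ha]
        have : (f x a - f' x a) ^ 2 = u ^ 2 := by rw [hudef]; ring
        rw [this]
      have hβ : 2 * (1 + t) / (t * Δ ^ 2) ≤ η x (π x) := by
        simp only [hηdef, if_pos rfl]
        have := Finset.single_le_sum
          (f := fun b => 2 * (1 + t) / (t * (f x (π x) - f x b) ^ 2))
          (fun b hb => by have := hΔ x b (Finset.mem_filter.1 hb).2; positivity)
          (Finset.mem_filter.2 ⟨Finset.mem_univ a, ha⟩)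
        rw [hΔdef]
        exact this
      have hgπ : 2 * (1 + t) / (t * Δ ^ 2) * (1 / 2 * v ^ 2) ≤ g (π x) := by
        simp only [hgdef]
        have : (f x (π x) - f' x (π x)) ^ 2 = v ^ 2 := by rw [hvdef]
        rw [this]
        exact mul_le_mul_of_nonneg_right hβ (by positivity)
      have hone : 1 ≤ (1 + t) * (2 / Δ ^ 2) * (1 / 2 * u ^ 2)
          + 2 * (1 + t) / (t * Δ ^ 2) * (1 / 2 * v ^ 2) := by
        have hpos : (0:ℝ) < t * Δ ^ 2 := by positivity
        rw [← mul_le_mul_iff_right₀ hpos]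
        have hexp : t * Δ ^ 2 * ((1 + t) * (2 / Δ ^ 2) * (1 / 2 * u ^ 2)
            + 2 * (1 + t) / (t * Δ ^ 2) * (1 / 2 * v ^ 2))
            = (1 + t) * t * u ^ 2 + (1 + t) * v ^ 2 := by
          field_simp
        rw [hexp, mul_one]
        nlinarith [sq_nonneg (t * u - v), sq_nonneg (u + v - Δ), mul_pos hΔpos hΔpos,
          mul_le_mul huv.le huv.le hΔpos.le (by linarith : (0:ℝ) ≤ u + v)]
      have hpair : g a + g (π x) ≤ ∑ b, g b := by
        have hsub : ({a, π x} : Finset A) ⊆ Finset.univ := Finset.subset_univ _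
        have := Finset.sum_le_sum_of_subset_of_nonneg (f := g) hsub
          (fun b _ _ => by
            simp only [hgdef]
            exact mul_nonneg (hηnn x b) (by positivity))
        rwa [Finset.sum_pair ha] at this
      have hx : ∑ b, g b ≤ ∑ x', ∑ b, η x' b * (1 / 2 * (f x' b - f' x' b) ^ 2) := by
        refine Finset.single_le_sum (f := fun x' => ∑ b, η x' b * (1 / 2 * (f x' b - f' x' b) ^ 2))
          (fun x' _ => Finset.sum_nonneg fun b _ =>
            mul_nonneg (hηnn x' b) (by positivity)) (Finset.mem_univ x)
      calc (1:ℝ) ≤ g a + g (π x) := by rw [hga]; linarith [hgπ, hone]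
        _ ≤ ∑ b, g b := hpair
        _ ≤ _ := hx
    · -- cost
      congr 1
      rw [hSdef, Finset.mul_sum]
      refine Finset.sum_congr rfl fun x _ => ?_
      rw [← Finset.sum_filter_add_sum_filter_not Finset.univ (fun a => a ≠ π x)
        (fun a => η x a * (f x (π x) - f x a))]
      have h2 : ∑ a ∈ Finset.univ.filter (fun a => ¬a ≠ π x),
          η x a * (f x (π x) - f x a) = 0 := by
        refine Finset.sum_eq_zero fun a ha => ?_
        have : a = π x := not_ne_iff.1 (Finset.mem_filter.1 ha).2
        simp [this]
      rw [h2, add_zero, Finset.mul_sum]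
      refine Finset.sum_congr rfl fun a ha => ?_
      have han : a ≠ π x := (Finset.mem_filter.1 ha).2
      have hd := hΔ x a han
      simp only [hηdef, if_neg han]
      field_simp
  refine le_antisymm ?_ ?_
  · -- upper bound
    by_cases hS0' : S = 0
    · have := key 1 one_pos
      simpa [hS0'] using this
    · have hSpos : 0 < S := lt_of_le_of_ne hS0 (Ne.symm hS0')
      apply ENNReal.le_of_forall_pos_le_add
      intro ε hε _
      have ht : (0:ℝ) < (ε : ℝ) / S := div_pos (by exact_mod_cast hε) hSpos
      refine (key _ ht).trans ?_
      have hcalc : (1 + (ε : ℝ) / S) * S = S + ε := by field_simp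
      rw [hcalc, ENNReal.ofReal_add hS0 (by positivity), ENNReal.ofReal_coe_nnreal]
  · -- lower bound
    apply le_sInf
    rintro c ⟨η, hnn, hfeas, rfl⟩
    apply ENNReal.ofReal_le_ofReal
    have hkey : ∀ x a, a ≠ π x →
        2 / (f x (π x) - f x a) ≤ η x a * (f x (π x) - f x a) := by
      intro x a ha
      set Δ := f x (π x) - f x a with hΔdef
      have hΔpos : 0 < Δ := hΔ x a ha
      have hcons : ∀ ε : ℝ, 0 < ε →
          1 ≤ η x a * (1 / 2 * (f x a - (f x (π x) + ε)) ^ 2) := by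
        intro ε hε
        set f' : X → A → ℝ := fun x' a' =>
          if x' = x ∧ a' = a then f x (π x) + ε else f x' a' with hf'
        have hx1 : f' x (π x) = f x (π x) := by
          simp [hf', Ne.symm ha]
        have hx2 : f' x a = f x (π x) + ε := by
          simp [hf']
        have h1 := hfeas f' (Set.mem_univ _) ⟨x, a, ha, by rw [hx1, hx2]; linarith⟩
        have hsum : ∑ x', ∑ a', η x' a' * (1 / 2 * (f x' a' - f' x' a') ^ 2)
            = η x a * (1 / 2 * (f x a - (f x (π x) + ε)) ^ 2) := by
          rw [Finset.sum_eq_single x]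
          · rw [Finset.sum_eq_single a]
            · rw [hx2]
            · intro b _ hb
              have hb' : f' x b = f x b := by
                simp only [hf']
                exact if_neg (by rintro ⟨-, h⟩; exact hb h)
              simp [hb']
            · simp
          · intro y _ hy
            refine Finset.sum_eq_zero fun b _ => ?_
            have hb' : f' y b = f y b := by
              simp only [hf']
              exact if_neg (by rintro ⟨h, -⟩; exact hy h)
            simp [hb']
          · simp
        rwa [hsum] at h1
      have hlim : Filter.Tendsto
          (fun ε : ℝ => η x a * (1 / 2 * (f x a - (f x (π x) + ε)) ^ 2))
          (nhdsWithin 0 (Set.Ioi 0))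
          (nhds (η x a * (1 / 2 * (f x a - f x (π x)) ^ 2))) := by
        have hc : Continuous fun ε : ℝ =>
            η x a * (1 / 2 * (f x a - (f x (π x) + ε)) ^ 2) := by fun_prop
        have := (hc.tendsto 0).mono_left (nhdsWithin_le_nhds (s := Set.Ioi (0:ℝ)))
        simpa using this
      have h2 : 1 ≤ η x a * (1 / 2 * (f x a - f x (π x)) ^ 2) :=
        ge_of_tendsto hlim (Filter.eventually_iff_exists_mem.2
          ⟨Set.Ioi 0, self_mem_nhdsWithin, fun ε hε => hcons ε hε⟩)
      have hsq : (f x a - f x (π x)) ^ 2 = Δ ^ 2 := by rw [hΔdef]; ring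
      rw [hsq] at h2
      rw [div_le_iff₀ hΔpos]
      have hid : η x a * Δ * Δ = 2 * (η x a * (1 / 2 * Δ ^ 2)) := by ring
      rw [hid]
      linarith
    have step1 : S ≤ ∑ x, ∑ a ∈ Finset.univ.filter (fun a => a ≠ π x),
        η x a * (f x (π x) - f x a) := by
      refine Finset.sum_le_sum fun x _ => Finset.sum_le_sum fun a ha => ?_
      exact hkey x a (Finset.mem_filter.1 ha).2
    have step2 : ∑ x, ∑ a ∈ Finset.univ.filter (fun a => a ≠ π x),
        η x a * (f x (π x) - f x a) ≤ ∑ x, ∑ a, η x a * (f x (π x) - f x a) := by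
      refine Finset.sum_le_sum fun x _ => ?_
      refine Finset.sum_le_sum_of_subset_of_nonneg (Finset.filter_subset _ _)
        fun a _ _ => mul_nonneg (hnn x a) ?_
      rcases eq_or_ne a (π x) with h | h
      · simp [h]
      · exact (hΔ x a h).le
    exact step1.trans step2
end

section
/- Let F be a real n×d matrix, D a diagonal n×n matrix with nonnegative entries, f ∈ ℝⁿ, and suppose V := FᵀDF is invertible. Set θ* := V⁻¹FᵀDf and let z ∈ ℝ^d be nonzero. If ⟨z, θ*⟩ ≤ 0, then the minimum of g(θ) := (f − Fθ)ᵀD(f − Fθ) over the half-space {θ ∈ ℝ^d : ⟨z, θ⟩ ≥ 0} equals g(θ*) + ⟨z, θ*⟩² / (zᵀV⁻¹z), and it is attained at θ̂ := θ* − (⟨z, θ*⟩ / (zᵀV⁻¹z))·V⁻¹z. If instead ⟨z, θ*⟩ ≥ 0, the minimum over the half-space equals the unconstrained minimum g(θ*). -/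
open Matrix

private lemma diag_mulVec_apply {n : ℕ} (D : Matrix (Fin n) (Fin n) ℝ)
    (hDdiag : ∀ i j, i ≠ j → D i j = 0) (x : Fin n → ℝ) (i : Fin n) :
    D.mulVec x i = D i i * x i := by
  have h0 : D.mulVec x i = ∑ j, D i j * x j := rfl
  rw [h0, Finset.sum_eq_single i]
  · intro j _ hj
    rw [hDdiag i j (Ne.symm hj), zero_mul]
  · intro h; exact absurd (Finset.mem_univ i) h

private lemma quad_form_eq {n d : ℕ} (F : Matrix (Fin n) (Fin d) ℝ)
    (D : Matrix (Fin n) (Fin n) ℝ)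
    (hDdiag : ∀ i j, i ≠ j → D i j = 0) (w : Fin d → ℝ) :
    w ⬝ᵥ (Fᵀ * D * F).mulVec w = ∑ i, D i i * (F.mulVec w i) ^ 2 := by
  have h1 : (Fᵀ * D * F).mulVec w = Fᵀ.mulVec (D.mulVec (F.mulVec w)) := by
    rw [Matrix.mulVec_mulVec, Matrix.mulVec_mulVec]
  rw [h1, Matrix.dotProduct_mulVec, Matrix.vecMul_transpose]
  unfold dotProduct
  refine Finset.sum_congr rfl fun i _ => ?_
  rw [diag_mulVec_apply D hDdiag]
  ring

/-- Minimization of a weighted least-squares objective over a half-space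
(Lemma 1, invertible design matrix case). With `V = FᵀDF` invertible,
`θ* = V⁻¹FᵀDf` the unconstrained minimizer, and `z ≠ 0`: if `⟨z, θ*⟩ ≤ 0`
the minimum of `g` over `{θ : ⟨z, θ⟩ ≥ 0}` is `g(θ*) + ⟨z,θ*⟩²/(zᵀV⁻¹z)`,
attained at `θ̂ = θ* − (⟨z,θ*⟩/(zᵀV⁻¹z)) V⁻¹z`; if `⟨z, θ*⟩ ≥ 0` the minimum
over the half-space is the unconstrained minimum `g(θ*)`. -/
theorem halfspace_least_squares {n d : ℕ} (hn : 0 < n) (hd : 0 < d)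
    (F : Matrix (Fin n) (Fin d) ℝ) (D : Matrix (Fin n) (Fin n) ℝ)
    (hDdiag : ∀ i j, i ≠ j → D i j = 0) (hDnonneg : ∀ i, 0 ≤ D i i)
    (f : Fin n → ℝ)
    (V : Matrix (Fin d) (Fin d) ℝ) (hV : V = Fᵀ * D * F) (hVinv : IsUnit V)
    (θstar : Fin d → ℝ) (hθ : θstar = V⁻¹.mulVec ((Fᵀ * D).mulVec f))
    (z : Fin d → ℝ) (hz : z ≠ 0)
    (g : (Fin d → ℝ) → ℝ)
    (hg : g = fun θ => (f - F.mulVec θ) ⬝ᵥ D.mulVec (f - F.mulVec θ)) :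
    (z ⬝ᵥ θstar ≤ 0 →
      IsLeast {y : ℝ | ∃ θ : Fin d → ℝ, 0 ≤ z ⬝ᵥ θ ∧ y = g θ}
        (g θstar + (z ⬝ᵥ θstar) ^ 2 / (z ⬝ᵥ V⁻¹.mulVec z)) ∧
      0 ≤ z ⬝ᵥ (θstar - ((z ⬝ᵥ θstar) / (z ⬝ᵥ V⁻¹.mulVec z)) • V⁻¹.mulVec z) ∧
      g (θstar - ((z ⬝ᵥ θstar) / (z ⬝ᵥ V⁻¹.mulVec z)) • V⁻¹.mulVec z) =
        g θstar + (z ⬝ᵥ θstar) ^ 2 / (z ⬝ᵥ V⁻¹.mulVec z)) ∧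
    (0 ≤ z ⬝ᵥ θstar →
      IsLeast {y : ℝ | ∃ θ : Fin d → ℝ, 0 ≤ z ⬝ᵥ θ ∧ y = g θ} (g θstar)) := by
  -- Basic facts about D and V
  have hDsymm : Dᵀ = D := by
    ext i j
    by_cases h : i = j
    · subst h; rfl
    · rw [Matrix.transpose_apply, hDdiag j i (fun e => h e.symm), hDdiag i j h]
  have hVsymm : Vᵀ = V := by
    rw [hV, Matrix.transpose_mul, Matrix.transpose_mul, Matrix.transpose_transpose,
      hDsymm, Matrix.mul_assoc]
  have hdet : IsUnit V.det := (Matrix.isUnit_iff_isUnit_det V).mp hVinv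
  have hVVinv : V * V⁻¹ = 1 := Matrix.mul_nonsing_inv V hdet
  have hVinvV : V⁻¹ * V = 1 := Matrix.nonsing_inv_mul V hdet
  -- nonnegativity of the quadratic form
  have hqnn : ∀ w : Fin d → ℝ, 0 ≤ w ⬝ᵥ V.mulVec w := by
    intro w
    rw [hV, quad_form_eq F D hDdiag]
    exact Finset.sum_nonneg fun i _ => mul_nonneg (hDnonneg i) (sq_nonneg _)
  -- symmetry of the quadratic form
  have hsdot : ∀ u w : Fin d → ℝ, u ⬝ᵥ V.mulVec w = w ⬝ᵥ V.mulVec u := by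
    intro u w
    rw [Matrix.dotProduct_mulVec, ← Matrix.mulVec_transpose, hVsymm, dotProduct_comm]
  -- definiteness : if the form vanishes then V.mulVec w = 0
  have hqdef : ∀ w : Fin d → ℝ, w ⬝ᵥ V.mulVec w = 0 → V.mulVec w = 0 := by
    intro w hw
    rw [hV, quad_form_eq F D hDdiag] at hw
    have hterm : ∀ i ∈ Finset.univ, D i i * (F.mulVec w i) ^ 2 = 0 :=
      (Finset.sum_eq_zero_iff_of_nonneg
        (fun i _ => mul_nonneg (hDnonneg i) (sq_nonneg _))).mp hw
    have hDF : D.mulVec (F.mulVec w) = 0 := by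
      funext i
      rw [diag_mulVec_apply D hDdiag]
      have := hterm i (Finset.mem_univ i)
      have h2 : D i i * F.mulVec w i = 0 := by
        rcases mul_eq_zero.mp this with h | h
        · rw [h, zero_mul]
        · rw [pow_eq_zero_iff (by norm_num) |>.mp h, mul_zero]
      exact h2
    have : V.mulVec w = Fᵀ.mulVec (D.mulVec (F.mulVec w)) := by
      rw [hV, Matrix.mulVec_mulVec, Matrix.mulVec_mulVec]
    rw [this, hDF, Matrix.mulVec_zero]
  set u : Fin d → ℝ := V⁻¹.mulVec z with hu
  set c : ℝ := z ⬝ᵥ u with hc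
  set a : ℝ := z ⬝ᵥ θstar with ha
  have hVu : V.mulVec u = z := by
    rw [hu, Matrix.mulVec_mulVec, hVVinv, Matrix.one_mulVec]
  have hcu : u ⬝ᵥ V.mulVec u = c := by rw [hVu, dotProduct_comm]
  have hczq : ∀ q : Fin d → ℝ, u ⬝ᵥ V.mulVec q = z ⬝ᵥ q := by
    intro q
    rw [hsdot, hVu, dotProduct_comm]
  have hcpos : 0 < c := by
    rcases lt_or_eq_of_le (hqnn u) with h | h
    · rwa [hcu] at h
    · exfalso
      have : V.mulVec u = 0 := hqdef u h.symm
      rw [hVu] at this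
      exact hz this
  have hcne : c ≠ 0 := ne_of_gt hcpos
  -- unconstrained optimality decomposition
  have hr0 : (Fᵀ * D).mulVec (f - F.mulVec θstar) = 0 := by
    have h1 : V.mulVec θstar = (Fᵀ * D).mulVec f := by
      rw [hθ, Matrix.mulVec_mulVec, hVVinv, Matrix.one_mulVec]
    rw [Matrix.mulVec_sub, Matrix.mulVec_mulVec, ← hV, h1, sub_self]
  have hcross : ∀ q : Fin d → ℝ,
      (f - F.mulVec θstar) ⬝ᵥ D.mulVec (F.mulVec q) = 0 := by
    intro q
    rw [Matrix.mulVec_mulVec, Matrix.dotProduct_mulVec, ← Matrix.mulVec_transpose,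
      Matrix.transpose_mul, hDsymm, hr0, zero_dotProduct]
  have hgdec : ∀ θ : Fin d → ℝ,
      g θ = g θstar + (θ - θstar) ⬝ᵥ V.mulVec (θ - θstar) := by
    intro θ
    have hfθ : f - F.mulVec θ = (f - F.mulVec θstar) - F.mulVec (θ - θstar) := by
      rw [Matrix.mulVec_sub]
      abel
    have hVq : (θ - θstar) ⬝ᵥ V.mulVec (θ - θstar)
        = F.mulVec (θ - θstar) ⬝ᵥ D.mulVec (F.mulVec (θ - θstar)) := by
      have h1 : (Fᵀ * D * F).mulVec (θ - θstar)
          = Fᵀ.mulVec (D.mulVec (F.mulVec (θ - θstar))) := by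
        rw [Matrix.mulVec_mulVec, Matrix.mulVec_mulVec]
      rw [hV, h1, Matrix.dotProduct_mulVec, Matrix.vecMul_transpose]
    have hc1 := hcross (θ - θstar)
    have hc2 : F.mulVec (θ - θstar) ⬝ᵥ D.mulVec (f - F.mulVec θstar) = 0 := by
      rw [Matrix.dotProduct_mulVec, ← Matrix.mulVec_transpose, hDsymm,
        dotProduct_comm]
      exact hc1
    have expand : ∀ (r s : Fin n → ℝ), s ⬝ᵥ D.mulVec r = 0 → r ⬝ᵥ D.mulVec s = 0 →
        (r - s) ⬝ᵥ D.mulVec (r - s) = r ⬝ᵥ D.mulVec r + s ⬝ᵥ D.mulVec s := by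
      intro r s h1 h2
      rw [Matrix.mulVec_sub, dotProduct_sub, sub_dotProduct,
        sub_dotProduct, h1, h2]
      ring
    rw [hg]
    simp only
    rw [hfθ, hVq, expand _ _ hc2 hc1]
  -- Cauchy–Schwarz type bound: (z ⬝ᵥ q)^2 / c ≤ q ⬝ᵥ V.mulVec q
  have hCS : ∀ q : Fin d → ℝ, (z ⬝ᵥ q) ^ 2 / c ≤ q ⬝ᵥ V.mulVec q := by
    intro q
    set t : ℝ := z ⬝ᵥ q with ht
    have hkey : 0 ≤ (q - (t / c) • u) ⬝ᵥ V.mulVec (q - (t / c) • u) := hqnn _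
    have hexp : (q - (t / c) • u) ⬝ᵥ V.mulVec (q - (t / c) • u)
        = q ⬝ᵥ V.mulVec q - 2 * (t / c) * t + (t / c) ^ 2 * c := by
      rw [Matrix.mulVec_sub, Matrix.mulVec_smul, sub_dotProduct,
        dotProduct_sub, dotProduct_sub, smul_dotProduct,
        smul_dotProduct, dotProduct_smul, dotProduct_smul,
        hczq q, hcu]
      have hqVu : q ⬝ᵥ V.mulVec u = t := by rw [hsdot, hczq]
      rw [hqVu]
      simp only [smul_eq_mul]
      ring
    rw [hexp] at hkey
    have hrw : 2 * (t / c) * t - (t / c) ^ 2 * c = t ^ 2 / c := by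
      field_simp
      ring
    nlinarith [hkey, hrw]
  constructor
  · -- case a ≤ 0
    intro haneg
    have hzθhat : z ⬝ᵥ (θstar - (a / c) • u) = 0 := by
      rw [dotProduct_sub, dotProduct_smul, ← ha, ← hc]
      simp only [smul_eq_mul]
      field_simp
      ring
    have hgθhat : g (θstar - (a / c) • u) = g θstar + a ^ 2 / c := by
      rw [hgdec]
      have hq : θstar - (a / c) • u - θstar = -((a / c) • u) := by abel
      rw [hq]
      have : -((a / c) • u) ⬝ᵥ V.mulVec (-((a / c) • u)) = (a / c) ^ 2 * c := by
        rw [Matrix.mulVec_neg, Matrix.mulVec_smul, neg_dotProduct,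
          dotProduct_neg, neg_neg, smul_dotProduct, dotProduct_smul,
          hcu]
        simp only [smul_eq_mul]
        ring
      rw [this]
      field_simp
    refine ⟨⟨⟨θstar - (a / c) • u, le_of_eq hzθhat.symm, hgθhat.symm⟩, ?_⟩,
      le_of_eq hzθhat.symm, hgθhat⟩
    rintro y ⟨θ, hθ0, rfl⟩
    have ht : z ⬝ᵥ (θ - θstar) = z ⬝ᵥ θ - a := by
      rw [dotProduct_sub, ha]
    have htge : -a ≤ z ⬝ᵥ (θ - θstar) := by
      rw [ht]; linarith
    have hCSq := hCS (θ - θstar)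
    have hsq : a ^ 2 ≤ (z ⬝ᵥ (θ - θstar)) ^ 2 := by
      nlinarith [htge, haneg]
    have h1 : a ^ 2 / c ≤ (z ⬝ᵥ (θ - θstar)) ^ 2 / c := by gcongr
    rw [hgdec θ]
    linarith
  · -- case 0 ≤ a
    intro hapos
    refine ⟨⟨θstar, hapos, rfl⟩, ?_⟩
    rintro y ⟨θ, hθ0, rfl⟩
    rw [hgdec θ]
    have := hqnn (θ - θstar)
    linarith
end

section
/- Let F be a real n×d matrix, D a diagonal n×n matrix with nonnegative entries, f ∈ ℝⁿ, V := FᵀDF, and let z ∈ ℝ^d satisfy Vz = 0. Then the infimum of g(θ) := (f − Fθ)ᵀD(f − Fθ) over the half-space {θ ∈ ℝ^d : ⟨z, θ⟩ ≥ 0} equals the unconstrained infimum of g over all θ ∈ ℝ^d. -/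
open Matrix

/-- Minimization of a weighted least-squares objective over a half-space
(Lemma 1, kernel case): if `V z = 0` with `V = FᵀDF`, then the constraint
`⟨z, θ⟩ ≥ 0` is vacuous, i.e. the infimum of `g` over the half-space equals
the unconstrained infimum. -/
theorem halfspace_least_squares_ker {n d : ℕ} (hn : 0 < n) (hd : 0 < d)
    (F : Matrix (Fin n) (Fin d) ℝ) (D : Matrix (Fin n) (Fin n) ℝ)
    (hDdiag : ∀ i j, i ≠ j → D i j = 0) (hDnonneg : ∀ i, 0 ≤ D i i)
    (f : Fin n → ℝ)
    (V : Matrix (Fin d) (Fin d) ℝ) (hV : V = Fᵀ * D * F)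
    (z : Fin d → ℝ) (hz : V.mulVec z = 0)
    (g : (Fin d → ℝ) → ℝ)
    (hg : g = fun θ => (f - F.mulVec θ) ⬝ᵥ D.mulVec (f - F.mulVec θ)) :
    sInf {y : ℝ | ∃ θ : Fin d → ℝ, 0 ≤ z ⬝ᵥ θ ∧ y = g θ} =
      sInf {y : ℝ | ∃ θ : Fin d → ℝ, y = g θ} := by
  set w : Fin n → ℝ := F.mulVec z with hw
  -- D.mulVec applied to any vector picks out diagonal
  have hDmul : ∀ (v : Fin n → ℝ) (i : Fin n), D.mulVec v i = D i i * v i := by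
    intro v i
    simp only [Matrix.mulVec, dotProduct]
    rw [Finset.sum_eq_single i]
    · intro j _ hji
      rw [hDdiag i j (Ne.symm hji), zero_mul]
    · intro h; exact absurd (Finset.mem_univ i) h
  -- zᵀ V z = 0
  have hzVz : w ⬝ᵥ D.mulVec w = 0 := by
    have h1 : z ⬝ᵥ V.mulVec z = 0 := by rw [hz]; simp
    have h2 : z ⬝ᵥ V.mulVec z = w ⬝ᵥ D.mulVec w := by
      rw [hV, Matrix.mul_assoc, ← Matrix.mulVec_mulVec, Matrix.dotProduct_mulVec,
        Matrix.vecMul_transpose, ← hw, ← Matrix.mulVec_mulVec]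
    rw [← h2, h1]
  -- each diagonal entry annihilates w
  have hDw : ∀ i, D i i * w i = 0 := by
    have hsum : ∑ i, D i i * (w i * w i) = 0 := by
      have : w ⬝ᵥ D.mulVec w = ∑ i, D i i * (w i * w i) := by
        simp only [dotProduct]
        refine Finset.sum_congr rfl fun i _ => ?_
        rw [hDmul]; ring
      rw [← this, hzVz]
    have hterm : ∀ i ∈ Finset.univ, D i i * (w i * w i) = 0 := by
      have := (Finset.sum_eq_zero_iff_of_nonneg (fun i _ =>
        mul_nonneg (hDnonneg i) (mul_self_nonneg (w i)))).mp hsum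
      exact this
    intro i
    rcases mul_eq_zero.mp (hterm i (Finset.mem_univ i)) with h | h
    · rw [h, zero_mul]
    · rw [mul_self_eq_zero.mp h, mul_zero]
  have hDw0 : D.mulVec w = 0 := by
    funext i; rw [hDmul]; exact hDw i
  -- g is invariant under shifts along z
  have hginv : ∀ (θ : Fin d → ℝ) (t : ℝ), g (θ + t • z) = g θ := by
    intro θ t
    have hFθ : F.mulVec (θ + t • z) = F.mulVec θ + t • w := by
      rw [Matrix.mulVec_add, Matrix.mulVec_smul, hw]
    set u : Fin n → ℝ := f - F.mulVec θ with hu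
    have hsub : f - F.mulVec (θ + t • z) = u - t • w := by
      rw [hFθ, hu]; abel
    have hDright : D.mulVec (u - t • w) = D.mulVec u := by
      rw [Matrix.mulVec_sub, Matrix.mulVec_smul, hDw0, smul_zero, sub_zero]
    have hwDu : w ⬝ᵥ D.mulVec u = 0 := by
      simp only [dotProduct]
      refine Finset.sum_eq_zero fun i _ => ?_
      rw [hDmul, show w i * (D i i * u i) = D i i * w i * u i by ring, hDw i, zero_mul]
    rw [hg]
    simp only [hsub, hDright]
    rw [sub_dotProduct, smul_dotProduct, hwDu, smul_zero, sub_zero]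
  -- the two sets coincide
  have hsets : {y : ℝ | ∃ θ : Fin d → ℝ, 0 ≤ z ⬝ᵥ θ ∧ y = g θ} =
      {y : ℝ | ∃ θ : Fin d → ℝ, y = g θ} := by
    ext y
    constructor
    · rintro ⟨θ, _, hy⟩; exact ⟨θ, hy⟩
    · rintro ⟨θ, hy⟩
      by_cases hθ : 0 ≤ z ⬝ᵥ θ
      · exact ⟨θ, hθ, hy⟩
      · push_neg at hθ
        have hzz : 0 < z ⬝ᵥ z := by
          have hnn : 0 ≤ z ⬝ᵥ z := Finset.sum_nonneg fun i _ => mul_self_nonneg (z i)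
          rcases lt_or_eq_of_le hnn with h | h
          · exact h
          · exfalso
            have : z = 0 := dotProduct_self_eq_zero.mp h.symm
            rw [this] at hθ
            simp at hθ
        refine ⟨θ + (-(z ⬝ᵥ θ) / (z ⬝ᵥ z)) • z, ?_, by rw [hy, hginv]⟩
        rw [dotProduct_add, dotProduct_smul]
        have : -(z ⬝ᵥ θ) / (z ⬝ᵥ z) * (z ⬝ᵥ z) = -(z ⬝ᵥ θ) :=
          div_mul_cancel₀ _ (ne_of_gt hzz)
        simp only [smul_eq_mul, this]
        linarith
  rw [hsets]
end

section
/- Let f* be a reward function with a unique optimal arm π* in every context, and let Φ contain a unique realizable representation φ* (i.e., f* ∈ ℱ_{φ*} and f* ∉ ℱ_φ for every φ ∈ Φ with φ ≠ φ*). Suppose there exists ε > 0 such that for every φ ∈ Φ with f* ∉ ℱ_φ and every θ ∈ ℝ^{d_φ}, Σ_{x∈𝒳} (f*(x,π*(x)) − ⟨φ(x,π*(x)), θ⟩)² ≥ ε. Then C(f*, ℱ_Φ) = C(f*, ℱ_{φ*}). -/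
open scoped ENNReal

/-- If `Φ` contains a unique realizable representation `φ*` and every
misspecified representation has mean squared error at least `ε > 0` when
fitting `f` on the optimal arms (i.e. under the allocation `η* = 1{a = π x}`),
then representation learning is exactly as hard as the contextual linear
bandit with the known representation `φ*`. -/
theorem complexity_eq_of_detectable_misspecification
    {X A : Type*} [Fintype X] [Fintype A] [Nonempty X] [Nonempty A]
    {ι : Type*} (d : ι → ℕ) (φ : (i : ι) → X → A → Fin (d i) → ℝ)
    (f : X → A → ℝ) (π : X → A) (hπ : UniqueOpt f π)
    (istar : ι) (hreal : f ∈ linClass (φ istar))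
    (huniq : ∀ i, i ≠ istar → f ∉ linClass (φ i))
    (ε : ℝ) (hε : 0 < ε)
    (hdetect : ∀ i, f ∉ linClass (φ i) → ∀ θ : Fin (d i) → ℝ,
      ε ≤ ∑ x, (f x (π x) - ∑ j, φ i x (π x) j * θ j) ^ 2) :
    Complexity f π (⋃ i, linClass (φ i)) =
      Complexity f π (linClass (φ istar)) := by
  classical
  have hsub : linClass (φ istar) ⊆ ⋃ i, linClass (φ i) := Set.subset_iUnion (fun i => linClass (φ i)) istar
  unfold Complexity
  congr 1
  ext c
  constructor
  · rintro ⟨η, h0, hcon, rfl⟩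
    exact ⟨η, h0, fun f' hf' => hcon f' (hsub hf'), rfl⟩
  · rintro ⟨η, h0, hcon, rfl⟩
    refine ⟨fun x a => η x a + if a = π x then 2 / ε else 0, ?_, ?_, ?_⟩
    · intro x a
      have : (0:ℝ) ≤ if a = π x then 2 / ε else 0 := by
        split_ifs <;> positivity
      linarith [h0 x a]
    · intro f' hf' halt
      obtain ⟨i, hfi'⟩ := Set.mem_iUnion.mp hf'
      have hsplit : ∀ x : X,
          ∑ a, (η x a + if a = π x then 2 / ε else 0) *
            (1 / 2 * (f x a - f' x a) ^ 2)
          = (∑ a, η x a * (1 / 2 * (f x a - f' x a) ^ 2))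
            + 2 / ε * (1 / 2 * (f x (π x) - f' x (π x)) ^ 2) := by
        intro x
        simp only [add_mul, ite_mul, zero_mul]
        rw [Finset.sum_add_distrib, Finset.sum_ite_eq' Finset.univ (π x)]
        simp
      have hη_nonneg : ∀ x : X,
          0 ≤ ∑ a, η x a * (1 / 2 * (f x a - f' x a) ^ 2) := by
        intro x
        apply Finset.sum_nonneg
        intro a _
        have := h0 x a
        positivity
      by_cases hi : f ∈ linClass (φ i)
      · have hieq : i = istar := by
          by_contra h
          exact huniq i h hi
        subst hieq
        have h1 := hcon f' hfi' halt
        calc (1:ℝ) ≤ ∑ x, ∑ a, η x a * (1 / 2 * (f x a - f' x a) ^ 2) := h1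
          _ ≤ _ := by
            apply Finset.sum_le_sum
            intro x _
            rw [hsplit x]
            have : (0:ℝ) ≤ 2 / ε * (1 / 2 * (f x (π x) - f' x (π x)) ^ 2) := by
              positivity
            linarith
      · obtain ⟨θ, hθ⟩ := hfi'
        have hd := hdetect i hi θ
        have key : ε ≤ ∑ x, (f x (π x) - f' x (π x)) ^ 2 := by
          calc ε ≤ ∑ x, (f x (π x) - ∑ j, φ i x (π x) j * θ j) ^ 2 := hd
            _ = ∑ x, (f x (π x) - f' x (π x)) ^ 2 := by
              apply Finset.sum_congr rfl
              intro x _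
              rw [hθ x (π x)]
        calc (1:ℝ) = 1 / ε * ε := by field_simp
          _ ≤ 1 / ε * ∑ x, (f x (π x) - f' x (π x)) ^ 2 := by
            apply mul_le_mul_of_nonneg_left key
            positivity
          _ = ∑ x, 2 / ε * (1 / 2 * (f x (π x) - f' x (π x)) ^ 2) := by
            rw [Finset.mul_sum]
            apply Finset.sum_congr rfl
            intro x _
            field_simp
          _ ≤ _ := by
            apply Finset.sum_le_sum
            intro x _
            rw [hsplit x]
            linarith [hη_nonneg x]
    · congr 1
      apply Finset.sum_congr rfl
      intro x _
      apply Finset.sum_congr rfl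
      intro a _
      by_cases ha : a = π x
      · subst ha
        simp
      · simp [ha]
end

section
/- Let φ̄ be the trivial representation of dimension |𝒳|·|𝒜| defined by φ̄(x,a) := the standard basis vector of ℝ^{𝒳×𝒜} indexed by (x,a), and let f* be any reward function with a unique optimal arm π* in every context. Then for ANY set Φ of representations (not necessarily realizable for f*), C(f*, ℱ_{Φ ∪ {φ̄}}) = Σ_{x∈𝒳} Σ_{a ≠ π*(x)} 2/Δ_{f*}(x,a). -/
open scoped ENNReal

/-- Core quadratic inequality used for feasibility of the near-optimal
allocation. -/
lemma core_ineq (δ D u v : ℝ) (hδ : 0 < δ) (hD : 0 < D) (huv : D < v - u) :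
    1 ≤ (1 + δ) * (2 / D ^ 2) * (1 / 2 * u ^ 2)
        + (1 + δ) * (2 / D ^ 2) / δ * (1 / 2 * v ^ 2) := by
  have hrw : (1 + δ) * (2 / D ^ 2) * (1 / 2 * u ^ 2)
        + (1 + δ) * (2 / D ^ 2) / δ * (1 / 2 * v ^ 2)
      = ((1 + δ) * (δ * u ^ 2 + v ^ 2)) / (δ * D ^ 2) := by
    field_simp
  rw [hrw, le_div_iff₀ (by positivity)]
  have hD2 : D ^ 2 ≤ (v - u) ^ 2 := by nlinarith
  nlinarith [sq_nonneg (v + δ * u), mul_le_mul_of_nonneg_left hD2 hδ.le]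

/-- If the function class contains *all* reward functions, the complexity is
exactly the sum of inverse gaps `∑_{x} ∑_{a ≠ π x} 2/Δ(x,a)`. -/
lemma complexity_univ {X A : Type*} [Fintype X] [Fintype A]
    [DecidableEq X] [DecidableEq A]
    (f : X → A → ℝ) (π : X → A) (hπ : UniqueOpt f π)
    (F : Set (X → A → ℝ)) (hF : ∀ g : X → A → ℝ, g ∈ F) :
    Complexity f π F =
      ENNReal.ofReal (∑ x, ∑ a ∈ Finset.univ.filter (fun a => a ≠ π x),
        2 / (f x (π x) - f x a)) := by
  classical
  have hΔpos : ∀ x a, a ≠ π x → 0 < f x (π x) - f x a :=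
    fun x a h => sub_pos.mpr (hπ x a h)
  set T : ℝ := ∑ x, ∑ a ∈ Finset.univ.filter (fun a => a ≠ π x),
      2 / (f x (π x) - f x a) with hT
  have hTnn : 0 ≤ T := by
    refine Finset.sum_nonneg fun x _ => Finset.sum_nonneg fun a ha => ?_
    exact le_of_lt (div_pos two_pos (hΔpos x a (Finset.mem_filter.mp ha).2))
  unfold Complexity
  refine le_antisymm ?_ ?_
  · -- Upper bound: exhibit a near-optimal feasible allocation.
    refine ENNReal.le_of_forall_pos_le_add fun ε hε _ => ?_
    have hT1 : (0 : ℝ) < T + 1 := by linarith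
    set δ : ℝ := (ε : ℝ) / (T + 1) with hδdef
    have hδ : 0 < δ := div_pos (by exact_mod_cast hε) hT1
    set η : X → A → ℝ := fun x a =>
      if a = π x then
        (∑ b ∈ Finset.univ.filter (fun b => b ≠ π x),
          (1 + δ) * (2 / (f x (π x) - f x b) ^ 2)) / δ
      else (1 + δ) * (2 / (f x (π x) - f x a) ^ 2) with hηdef
    have hcnn : ∀ x a, a ≠ π x →
        0 ≤ (1 + δ) * (2 / (f x (π x) - f x a) ^ 2) := by
      intro x a ha
      have := hΔpos x a ha
      positivity
    have hηnn : ∀ x a, 0 ≤ η x a := by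
      intro x a
      by_cases h : a = π x
      · simp only [hηdef, h, if_pos rfl]
        refine div_nonneg (Finset.sum_nonneg fun b hb => ?_) hδ.le
        exact hcnn x b (Finset.mem_filter.mp hb).2
      · simpa [hηdef, h] using hcnn x a h
    -- feasibility
    have hfeas : ∀ f' ∈ F, (∃ x, ∃ a, a ≠ π x ∧ f' x (π x) < f' x a) →
        1 ≤ ∑ x, ∑ a, η x a * (1 / 2 * (f x a - f' x a) ^ 2) := by
      rintro f' - ⟨x, a, hax, hlt⟩
      have hDpos : 0 < f x (π x) - f x a := hΔpos x a hax
      have key := core_ineq δ (f x (π x) - f x a) (f x a - f' x a)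
        (f x (π x) - f' x (π x)) hδ hDpos (by linarith)
      have hηa : η x a = (1 + δ) * (2 / (f x (π x) - f x a) ^ 2) := by
        simp [hηdef, hax]
      have hηπ : (1 + δ) * (2 / (f x (π x) - f x a) ^ 2) / δ ≤ η x (π x) := by
        simp only [hηdef, if_pos rfl]
        refine div_le_div_of_nonneg_right ?_ hδ.le
        exact Finset.single_le_sum
          (fun b hb => hcnn x b (Finset.mem_filter.mp hb).2)
          (Finset.mem_filter.mpr ⟨Finset.mem_univ a, hax⟩)
      have hstep : 1 ≤ η x a * (1 / 2 * (f x a - f' x a) ^ 2)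
          + η x (π x) * (1 / 2 * (f x (π x) - f' x (π x)) ^ 2) := by
        refine key.trans ?_
        rw [hηa]
        have := mul_le_mul_of_nonneg_right hηπ
          (by positivity : (0 : ℝ) ≤ 1 / 2 * (f x (π x) - f' x (π x)) ^ 2)
        linarith
      have hpair : η x a * (1 / 2 * (f x a - f' x a) ^ 2)
            + η x (π x) * (1 / 2 * (f x (π x) - f' x (π x)) ^ 2)
          ≤ ∑ b, η x b * (1 / 2 * (f x b - f' x b) ^ 2) := by
        have hp := Finset.sum_pair
          (f := fun b => η x b * (1 / 2 * (f x b - f' x b) ^ 2)) hax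
        rw [← hp]
        refine Finset.sum_le_sum_of_subset_of_nonneg (Finset.subset_univ _) ?_
        intro b _ _
        exact mul_nonneg (hηnn x b) (by positivity)
      have htot : (∑ b, η x b * (1 / 2 * (f x b - f' x b) ^ 2))
          ≤ ∑ x', ∑ b, η x' b * (1 / 2 * (f x' b - f' x' b) ^ 2) := by
        exact Finset.single_le_sum
          (f := fun x' => ∑ b, η x' b * (1 / 2 * (f x' b - f' x' b) ^ 2))
          (fun x' _ => Finset.sum_nonneg fun b _ =>
            mul_nonneg (hηnn x' b) (by positivity)) (Finset.mem_univ x)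
      linarith
    -- cost of this allocation
    have hcost : ∑ x, ∑ a, η x a * (f x (π x) - f x a) = (1 + δ) * T := by
      rw [hT, Finset.mul_sum]
      refine Finset.sum_congr rfl fun x _ => ?_
      rw [Finset.mul_sum,
        ← Finset.sum_subset (Finset.filter_subset (fun a => a ≠ π x)
          Finset.univ) ?_]
      · refine Finset.sum_congr rfl fun a ha => ?_
        have hax := (Finset.mem_filter.mp ha).2
        have hne : f x (π x) - f x a ≠ 0 := ne_of_gt (hΔpos x a hax)
        simp only [hηdef, if_neg hax]
        field_simp
      · intro a _ ha
        have : a = π x := by simpa using ha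
        simp [this]
    have hle : sInf { c : ℝ≥0∞ | ∃ η : X → A → ℝ,
        (∀ x a, 0 ≤ η x a) ∧
        (∀ f' ∈ F, (∃ x, ∃ a, a ≠ π x ∧ f' x (π x) < f' x a) →
          1 ≤ ∑ x, ∑ a, η x a * (1 / 2 * (f x a - f' x a) ^ 2)) ∧
        c = ENNReal.ofReal (∑ x, ∑ a, η x a * (f x (π x) - f x a)) }
        ≤ ENNReal.ofReal ((1 + δ) * T) :=
      sInf_le ⟨η, hηnn, hfeas, by rw [hcost]⟩
    refine hle.trans ?_
    have h1 : (1 + δ) * T = T + δ * T := by ring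
    have h2 : δ * T ≤ (ε : ℝ) := by
      rw [hδdef, div_mul_eq_mul_div, div_le_iff₀ hT1]
      nlinarith [NNReal.coe_nonneg ε]
    rw [h1, ENNReal.ofReal_add hTnn (by positivity)]
    exact add_le_add_right ((ENNReal.ofReal_le_ofReal h2).trans_eq
      ENNReal.ofReal_coe_nnreal) _
  · -- Lower bound: every feasible allocation pays at least the sum of gaps.
    refine le_sInf ?_
    rintro c ⟨η, hnn, hcon, rfl⟩
    refine ENNReal.ofReal_le_ofReal ?_
    have hkey : ∀ x a, a ≠ π x →
        2 / (f x (π x) - f x a) ≤ η x a * (f x (π x) - f x a) := by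
      intro x a hax
      have hDpos : 0 < f x (π x) - f x a := hΔpos x a hax
      have h2 : ∀ t : ℝ, 0 < t →
          1 ≤ η x a * (1 / 2 * ((f x (π x) - f x a) + t) ^ 2) := by
        intro t ht
        set f' : X → A → ℝ := fun x' a' =>
          if (x', a') = (x, a) then f x (π x) + t else f x' a' with hf'
        have hself : f' x a = f x (π x) + t := by simp [hf']
        have hother : ∀ x' a', (x', a') ≠ (x, a) → f' x' a' = f x' a' := by
          intro x' a' h
          simp only [hf']
          rw [if_neg h]
        have hwit : f' x (π x) < f' x a := by
          rw [hself, hother x (π x)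
            (by intro h; exact hax ((congrArg Prod.snd h).symm))]
          linarith
        have hc := hcon f' (hF f') ⟨x, a, hax, hwit⟩
        have hzero : ∀ x' a', (x', a') ≠ (x, a) →
            η x' a' * (1 / 2 * (f x' a' - f' x' a') ^ 2) = 0 := by
          intro x' a' h
          rw [hother x' a' h]
          simp
        have hsum : ∑ x', ∑ b, η x' b * (1 / 2 * (f x' b - f' x' b) ^ 2)
            = η x a * (1 / 2 * (f x a - f' x a) ^ 2) := by
          rw [Finset.sum_eq_single_of_mem x (Finset.mem_univ x)
            (fun x' _ hx' => Finset.sum_eq_zero fun b _ =>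
              hzero x' b (by simp [hx']))]
          exact Finset.sum_eq_single_of_mem a (Finset.mem_univ a)
            (fun b _ hb => hzero x b (by simp [hb]))
        rw [hsum, hself] at hc
        have hsq : (f x a - (f x (π x) + t)) ^ 2
            = ((f x (π x) - f x a) + t) ^ 2 := by ring
        rwa [hsq] at hc
      have hlim : 1 ≤ η x a * (1 / 2 * (f x (π x) - f x a) ^ 2) := by
        have hcont : Filter.Tendsto
            (fun t : ℝ => η x a * (1 / 2 * ((f x (π x) - f x a) + t) ^ 2))
            (nhdsWithin 0 (Set.Ioi 0))
            (nhds (η x a * (1 / 2 * ((f x (π x) - f x a) + 0) ^ 2))) := by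
          refine Filter.Tendsto.mono_left ?_ nhdsWithin_le_nhds
          exact Continuous.tendsto (by continuity) 0
        have := ge_of_tendsto hcont
          (eventually_mem_nhdsWithin.mono fun t ht => h2 t ht)
        simpa using this
      rw [div_le_iff₀ hDpos]
      nlinarith [hlim, hDpos]
    rw [hT]
    refine Finset.sum_le_sum fun x _ => ?_
    have h1 : ∑ a ∈ Finset.univ.filter (fun a => a ≠ π x),
          2 / (f x (π x) - f x a)
        ≤ ∑ a ∈ Finset.univ.filter (fun a => a ≠ π x),
          η x a * (f x (π x) - f x a) :=
      Finset.sum_le_sum fun a ha => hkey x a (Finset.mem_filter.mp ha).2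
    refine h1.trans (Finset.sum_le_sum_of_subset_of_nonneg
      (Finset.filter_subset _ _) ?_)
    intro b _ _
    by_cases hb : b = π x
    · simp [hb]
    · exact mul_nonneg (hnn x b) (le_of_lt (hΔpos x b hb))

/-- Adding the trivial (tabular) representation `φ̄`, given by the standard
basis of `ℝ^{𝒳×𝒜}`, to any set of representations makes representation
learning exactly as hard as learning without any prior knowledge: the
complexity equals the unstructured sum of inverse gaps. -/
theorem complexity_with_trivial_representation
    {X A : Type*} [Fintype X] [Fintype A] [Nonempty X] [Nonempty A]
    [DecidableEq X] [DecidableEq A]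
    {ι : Type*} (d : ι → ℕ) (φ : (i : ι) → X → A → Fin (d i) → ℝ)
    (φbar : X → A → X × A → ℝ)
    (hφbar : ∀ x a p, φbar x a p = if p = (x, a) then 1 else 0)
    (f : X → A → ℝ) (π : X → A) (hπ : UniqueOpt f π) :
    Complexity f π ((⋃ i, linClass (φ i)) ∪ linClass φbar) =
      ENNReal.ofReal (∑ x, ∑ a ∈ Finset.univ.filter (fun a => a ≠ π x),
        2 / (f x (π x) - f x a)) := by
  refine complexity_univ f π hπ _ fun g => ?_
  refine Set.mem_union_right _ ⟨fun p => g p.1 p.2, fun x a => ?_⟩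
  simp [hφbar, ite_mul, Finset.sum_ite_eq']
end

section
/- Let Φ be a set of representations and f* ∈ ℱ_Φ a reward function with a unique optimal arm π* in every context. A representation φ realizable for f* is HLS if for every x ∈ 𝒳 and a ≠ π*(x), φ(x,a) ∈ span{φ(x', π*(x')) : x' ∈ 𝒳}. If Φ contains a representation φ that is realizable for f* (f* ∈ ℱ_φ) but not HLS, then C(f*, ℱ_Φ) > 0. -/
open scoped ENNReal

/-- If `Φ` contains a realizable representation that is not HLS (some
sub-optimal feature `φ(x,a)` is outside the span of the optimal features
`{φ(x', π*(x'))}`), then sub-logarithmic regret is impossible: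
`C(f, ℱ_Φ) > 0`. -/
theorem complexity_pos_of_realizable_not_HLS
    {X A : Type*} [Fintype X] [Fintype A] [Nonempty X] [Nonempty A]
    {ι : Type*} (d : ι → ℕ) (φ : (i : ι) → X → A → Fin (d i) → ℝ)
    (f : X → A → ℝ) (π : X → A) (hπ : UniqueOpt f π)
    (hf : f ∈ ⋃ i, linClass (φ i))
    (i : ι) (hreal : f ∈ linClass (φ i))
    (hnotHLS : ¬ ∀ x a, a ≠ π x →
      φ i x a ∈ Submodule.span ℝ (Set.range fun x' => φ i x' (π x'))) :
    0 < Complexity f π (⋃ i, linClass (φ i)) := by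
  classical
  obtain ⟨θ, hθ⟩ := hreal
  push_neg at hnotHLS
  obtain ⟨x₀, a₀, ha₀, hv⟩ := hnotHLS
  obtain ⟨g, hgv, hgV⟩ :=
    (Submodule.span ℝ (Set.range fun x' => φ i x' (π x'))).exists_dual_map_eq_bot_of_notMem
      hv inferInstance
  have hgopt : ∀ x, g (φ i x (π x)) = 0 := fun x =>
    (Submodule.mem_bot ℝ).mp
      (hgV ▸ Submodule.mem_map_of_mem (Submodule.subset_span ⟨x, rfl⟩))
  set gap : ℝ := f x₀ (π x₀) - f x₀ a₀ with hgapdef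
  have hgap0 : 0 < gap := sub_pos.mpr (hπ x₀ a₀ ha₀)
  set t : ℝ := (gap + 1) / g (φ i x₀ a₀) with htdef
  have htg : t * g (φ i x₀ a₀) = gap + 1 := div_mul_cancel₀ _ hgv
  set θ' : Fin (d i) → ℝ := fun j => θ j + t * g (Pi.single j 1) with hθ'def
  set f' : X → A → ℝ := fun x a => ∑ j, φ i x a j * θ' j with hf'def
  have hf'mem : f' ∈ ⋃ i, linClass (φ i) :=
    Set.mem_iUnion.mpr ⟨i, θ', fun x a => rfl⟩
  have hg : ∀ w : Fin (d i) → ℝ, g w = ∑ j, w j * g (Pi.single j 1) := fun w => by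
    rw [LinearMap.pi_apply_eq_sum_univ g w]
    refine Finset.sum_congr rfl fun j _ => ?_
    rw [smul_eq_mul]
    have hs : (fun k => if j = k then (1:ℝ) else 0) = Pi.single j 1 := by
      funext k
      simp [Pi.single_apply, eq_comm]
    rw [hs]
  have key : ∀ x a, f' x a = f x a + t * g (φ i x a) := by
    intro x a
    rw [hf'def]
    simp only [hθ'def, mul_add, Finset.sum_add_distrib, ← hθ x a]
    rw [hg (φ i x a), Finset.mul_sum]
    congr 1
    exact Finset.sum_congr rfl fun j _ => by ring
  have hopt : ∀ x, f' x (π x) = f x (π x) := by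
    intro x; rw [key, hgopt]; ring
  have hlt : f' x₀ (π x₀) < f' x₀ a₀ := by
    rw [hopt, key, htg]
    rw [hgapdef] at hgap0 ⊢
    linarith
  set S : Finset (X × A) := Finset.univ.filter fun p => p.2 ≠ π p.1 with hSdef
  have hS : (x₀, a₀) ∈ S := by simp [hSdef, ha₀]
  have hSne : S.Nonempty := ⟨_, hS⟩
  set c : X × A → ℝ := fun p => 1 / 2 * (f p.1 p.2 - f' p.1 p.2) ^ 2 with hcdef
  set Δ : X × A → ℝ := fun p => f p.1 (π p.1) - f p.1 p.2 with hΔdef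
  set M : ℝ := S.sup' hSne c with hMdef
  set ε : ℝ := S.inf' hSne Δ with hεdef
  have hε : 0 < ε := by
    rw [hεdef, Finset.lt_inf'_iff]
    intro p hp
    have : p.2 ≠ π p.1 := by simpa [hSdef] using hp
    exact sub_pos.mpr (hπ p.1 p.2 this)
  have hM : 0 < M := by
    have h1 : c (x₀, a₀) ≤ M := Finset.le_sup' c hS
    have h2 : 0 < c (x₀, a₀) := by
      have h3 : f x₀ a₀ - f' x₀ a₀ = -(gap + 1) := by rw [key, htg]; ring
      show (0 : ℝ) < 1 / 2 * (f x₀ a₀ - f' x₀ a₀) ^ 2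
      rw [h3]
      nlinarith [hgap0]
    linarith
  refine lt_of_lt_of_le (ENNReal.ofReal_pos.mpr (div_pos hε hM)) (le_sInf ?_)
  rintro b ⟨η, hη0, hcon, rfl⟩
  apply ENNReal.ofReal_le_ofReal
  have h1 := hcon f' hf'mem ⟨x₀, a₀, ha₀, hlt⟩
  have hpt : ∀ x a, η x a * (1 / 2 * (f x a - f' x a) ^ 2) ≤
      M / ε * (η x a * (f x (π x) - f x a)) := by
    intro x a
    by_cases hxa : a = π x
    · subst hxa
      rw [hopt]
      simp
    · have hmem : (x, a) ∈ S := by simp [hSdef, hxa]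
      have hc : 1 / 2 * (f x a - f' x a) ^ 2 ≤ M := Finset.le_sup' c hmem
      have hΔ : ε ≤ f x (π x) - f x a := Finset.inf'_le Δ hmem
      calc η x a * (1 / 2 * (f x a - f' x a) ^ 2) ≤ η x a * M :=
            mul_le_mul_of_nonneg_left hc (hη0 x a)
        _ = M / ε * (η x a * ε) := by field_simp
        _ ≤ M / ε * (η x a * (f x (π x) - f x a)) :=
            mul_le_mul_of_nonneg_left (mul_le_mul_of_nonneg_left hΔ (hη0 x a))
              (by positivity)
  have h2 : (1 : ℝ) ≤ M / ε * ∑ x, ∑ a, η x a * (f x (π x) - f x a) := by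
    calc (1 : ℝ) ≤ ∑ x, ∑ a, η x a * (1 / 2 * (f x a - f' x a) ^ 2) := h1
      _ ≤ ∑ x, ∑ a, M / ε * (η x a * (f x (π x) - f x a)) :=
          Finset.sum_le_sum fun x _ => Finset.sum_le_sum fun a _ => hpt x a
      _ = M / ε * ∑ x, ∑ a, η x a * (f x (π x) - f x a) := by
          simp only [← Finset.mul_sum]
  rw [div_le_iff₀ hM]
  have h3 := mul_le_mul_of_nonneg_left h2 hε.le
  rw [mul_one] at h3
  have h4 : ε * (M / ε * ∑ x, ∑ a, η x a * (f x (π x) - f x a))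
      = (∑ x, ∑ a, η x a * (f x (π x) - f x a)) * M := by
    field_simp
  linarith [h3, h4]
end

section
/- Let |𝒳| = X, |𝒜| = A ≥ 2, let 2 ≤ d_min < d_max ≤ X(A−1), let 2 ≤ N ≤ d_max − d_min + 1, and let Δ_min > 0. Then there exist a reward function f* : 𝒳 × 𝒜 → ℝ with a unique optimal arm in every context and all positive gaps equal to Δ_min, and a set Φ = {φ_1, …, φ_N} of nested representations (the first d_i coordinates of φ_{i+1} equal φ_i) with dim(φ_1) = d_min and dim(φ_N) = d_max, such that f* ∈ ℱ_{φ_i} for all i, C(f*, ℱ_{φ_1}) ≤ 2·d_min/Δ_min, and C(f*, ℱ_{φ_N}) ≥ d_max/Δ_min. -/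
open scoped ENNReal

set_option maxHeartbeats 1600000 in
/-- There exist an instance with all gaps equal to `Δ_min` and a set of `N`
nested representations, all realizable, with smallest dimension `d_min` and
largest dimension `d_max`, such that learning with the smallest representation
costs at most `2 d_min / Δ_min` while learning with the largest costs at least
`d_max / Δ_min`. -/
theorem exists_nested_dimension_gap {X A : Type*} [Fintype X] [Fintype A]
    [Nonempty X] [Nonempty A]
    (hA : 2 ≤ Fintype.card A)
    (dmin dmax N : ℕ) (hdmin : 2 ≤ dmin) (hdd : dmin < dmax)
    (hdmax : dmax ≤ Fintype.card X * (Fintype.card A - 1))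
    (hN2 : 2 ≤ N) (hN : N ≤ dmax - dmin + 1)
    (Δmin : ℝ) (hΔ : 0 < Δmin) :
    ∃ (f : X → A → ℝ) (π : X → A) (d : Fin N → ℕ)
      (φ : (i : Fin N) → X → A → Fin (d i) → ℝ),
      UniqueOpt f π ∧
      (∀ x a, a ≠ π x → f x (π x) - f x a = Δmin) ∧
      StrictMono d ∧
      d ⟨0, by omega⟩ = dmin ∧ d ⟨N - 1, by omega⟩ = dmax ∧
      (∀ i j : Fin N, (i : ℕ) + 1 = (j : ℕ) →
        ∀ (x : X) (a : A) (k : ℕ) (hk : k < d i) (hk' : k < d j),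
          φ j x a ⟨k, hk'⟩ = φ i x a ⟨k, hk⟩) ∧
      (∀ i, f ∈ linClass (φ i)) ∧
      Complexity f π (linClass (φ ⟨0, by omega⟩)) ≤
        ENNReal.ofReal (2 * dmin / Δmin) ∧
      ENNReal.ofReal (dmax / Δmin) ≤
        Complexity f π (linClass (φ ⟨N - 1, by omega⟩)) := by
  classical
  obtain ⟨a0⟩ := (inferInstance : Nonempty A)
  -- an embedding of `Fin (dmax - 1)` into the suboptimal pairs
  have hsubcard : Fintype.card {p : X × A // p.2 ≠ a0} =
      Fintype.card X * (Fintype.card A - 1) := by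
    have e1 : {p : X × A // p.2 ≠ a0} ≃ X × {a : A // a ≠ a0} :=
      { toFun := fun p => (p.1.1, ⟨p.1.2, p.2⟩)
        invFun := fun q => ⟨(q.1, q.2.1), q.2.2⟩
        left_inv := fun p => rfl
        right_inv := fun q => rfl }
    rw [Fintype.card_congr e1, Fintype.card_prod]
    congr 1
    rw [Fintype.card_subtype_compl, Fintype.card_subtype_eq]
  obtain ⟨e⟩ := Function.Embedding.nonempty_of_card_le
    (show Fintype.card (Fin (dmax - 1)) ≤ Fintype.card {p : X × A // p.2 ≠ a0} by
      rw [hsubcard, Fintype.card_fin]; omega)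
  set E : Fin (dmax - 1) → X × A := fun k => (e k).1 with hEdef
  have hEinj : Function.Injective E := fun i j h => e.injective (Subtype.ext h)
  have hEne : ∀ k, (E k).2 ≠ a0 := fun k => (e k).2
  -- the common feature map
  set ψ : X → A → ℕ → ℝ := fun x a n =>
    if n = 0 then (if a = a0 then 1 else 0)
    else if h : n - 1 < dmax - 1 then (if E ⟨n - 1, h⟩ = (x, a) then 1 else 0) else 0
    with hψdef
  have hψ0 : ∀ x a, ψ x a 0 = if a = a0 then 1 else 0 := by intro x a; simp [hψdef]
  have hψopt : ∀ x n, n ≠ 0 → ψ x a0 n = 0 := by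
    intro x n hn
    simp only [hψdef, if_neg hn]
    split
    · rw [if_neg]
      intro hEq
      exact hEne _ (by rw [hEq])
    · rfl
  have hψE : ∀ (k : Fin (dmax - 1)) n,
      ψ (E k).1 (E k).2 n = if n = k.val + 1 then 1 else 0 := by
    intro k n
    rcases n with _ | j
    · rw [hψ0, if_neg (hEne k), if_neg (by omega)]
    · simp only [hψdef, Nat.succ_ne_zero, if_false, Nat.succ_sub_one]
      by_cases hj : j < dmax - 1
      · rw [dif_pos hj]
        by_cases hjk : j = k.val
        · rw [if_pos, if_pos (by omega)]
          have : (⟨j, hj⟩ : Fin (dmax - 1)) = k := Fin.ext hjk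
          rw [this]
        · rw [if_neg, if_neg (by omega)]
          intro hEq
          exact hjk (congrArg Fin.val (hEinj hEq))
      · rw [dif_neg hj, if_neg (by omega)]
  have hψoff : ∀ x a, a ≠ a0 → (∀ k, E k ≠ (x, a)) → ∀ n, ψ x a n = 0 := by
    intro x a ha hr n
    rcases n with _ | j
    · rw [hψ0, if_neg ha]
    · simp only [hψdef, Nat.succ_ne_zero, if_false, Nat.succ_sub_one]
      split
      · rw [if_neg (hr _)]
      · rfl
  -- sum evaluation lemmas
  have hFopt : ∀ (m : ℕ) (hm : 0 < m) (θ : Fin m → ℝ) (x : X),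
      ∑ j : Fin m, ψ x a0 j.val * θ j = θ ⟨0, hm⟩ := by
    intro m hm θ x
    rw [show θ ⟨0, hm⟩ = ∑ j : Fin m, if j = ⟨0, hm⟩ then θ j else 0 from
      (Fintype.sum_ite_eq' _ _).symm]
    refine Finset.sum_congr rfl fun j _ => ?_
    by_cases hj : j = ⟨0, hm⟩
    · subst hj; rw [hψ0, if_pos rfl, one_mul, if_pos rfl]
    · rw [hψopt _ _ (fun h0 => hj (Fin.ext h0)), zero_mul, if_neg hj]
  have hFE : ∀ (m : ℕ) (θ : Fin m → ℝ) (k : Fin (dmax - 1)) (hk : k.val + 1 < m),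
      ∑ j : Fin m, ψ (E k).1 (E k).2 j.val * θ j = θ ⟨k.val + 1, hk⟩ := by
    intro m θ k hk
    rw [show θ ⟨k.val + 1, hk⟩ = ∑ j : Fin m, if j = ⟨k.val + 1, hk⟩ then θ j else 0 from
      (Fintype.sum_ite_eq' _ _).symm]
    refine Finset.sum_congr rfl fun j _ => ?_
    rw [hψE]
    by_cases hj : j = ⟨k.val + 1, hk⟩
    · subst hj; rw [if_pos rfl, one_mul, if_pos rfl]
    · rw [if_neg (fun h0 => hj (Fin.ext h0)), zero_mul, if_neg hj]
  have hFE' : ∀ (m : ℕ) (θ : Fin m → ℝ) (k : Fin (dmax - 1)) (hk : m ≤ k.val + 1),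
      ∑ j : Fin m, ψ (E k).1 (E k).2 j.val * θ j = 0 := by
    intro m θ k hk
    refine Finset.sum_eq_zero fun j _ => ?_
    rw [hψE, if_neg (by omega), zero_mul]
  have hFoff : ∀ (m : ℕ) (θ : Fin m → ℝ) x a, a ≠ a0 → (∀ k, E k ≠ (x, a)) →
      ∑ j : Fin m, ψ x a j.val * θ j = 0 := by
    intro m θ x a ha hr
    refine Finset.sum_eq_zero fun j _ => ?_
    rw [hψoff _ _ ha hr, zero_mul]
  -- the instance
  set f : X → A → ℝ := fun _ a => if a = a0 then Δmin else 0 with hfdef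
  set π : X → A := fun _ => a0 with hπdef
  have hfopt : ∀ x, f x (π x) = Δmin := fun x => by rw [hfdef, hπdef]; simp
  have hfsub : ∀ x a, a ≠ a0 → f x a = 0 := fun x a ha => by rw [hfdef]; simp [ha]
  have hfa0 : ∀ y, f y a0 = Δmin := fun y => by rw [hfdef]; simp
  have hπx : ∀ y, π y = a0 := fun y => by rw [hπdef]
  -- a generic two-point lower bound for double sums of nonnegative functions
  have two_point : ∀ (g : X → A → ℝ), (∀ x a, 0 ≤ g x a) →
      ∀ (x : X) (a b : A), a ≠ b → g x a + g x b ≤ ∑ y, ∑ c, g y c := by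
    intro g hg x a b hab
    rw [← Finset.sum_product' (f := fun y c => g y c), Finset.univ_product_univ]
    have hsub : ({(x, a), (x, b)} : Finset (X × A)) ⊆ Finset.univ := Finset.subset_univ _
    have := Finset.sum_le_sum_of_subset_of_nonneg hsub
      (fun p _ _ => hg p.1 p.2)
    rwa [Finset.sum_pair (by simp [hab] : ((x, a) : X × A) ≠ (x, b))] at this
  -- the upper bound for the smallest representation
  have upper : ∀ m : ℕ, dmin = m →
      Complexity f π (linClass (fun x a (k : Fin m) => ψ x a k.val)) ≤
        ENNReal.ofReal (2 * dmin / Δmin) := by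
    rintro m rfl
    have hm1 : (0:ℝ) < (dmin : ℝ) - 1 := by
      have : (2:ℝ) ≤ (dmin : ℝ) := by exact_mod_cast hdmin
      linarith
    have hmR : (2:ℝ) ≤ (dmin : ℝ) := by exact_mod_cast hdmin
    have h0dmin : 0 < dmin := by omega
    set E' : Fin (dmin - 1) → X × A := fun k => E ⟨k.val, by omega⟩ with hE'def
    have hE'inj : Function.Injective E' := by
      intro k l hkl
      have h2 : E ⟨k.val, by omega⟩ = E ⟨l.val, by omega⟩ := hkl
      have h3 := hEinj h2
      simp only [Fin.mk.injEq] at h3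
      exact Fin.ext h3
    set T : Finset (X × A) := Finset.image E' Finset.univ with hTdef
    have hTmem : ∀ p : X × A, p ∈ T ↔ ∃ k : Fin (dmax - 1), k.val < dmin - 1 ∧ E k = p := by
      intro p
      rw [hTdef, Finset.mem_image]
      constructor
      · rintro ⟨k, -, rfl⟩
        exact ⟨⟨k.val, by omega⟩, by simpa using k.2, rfl⟩
      · rintro ⟨k, hk, rfl⟩
        exact ⟨⟨k.val, hk⟩, Finset.mem_univ _, by rw [hE'def]⟩
    have hTcard : T.card = dmin - 1 := by
      rw [hTdef, Finset.card_image_of_injective _ hE'inj]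
      simp
    have hTne : ∀ p ∈ T, p.2 ≠ a0 := by
      intro p hp
      obtain ⟨k, -, rfl⟩ := (hTmem p).1 hp
      exact hEne k
    set B : ℝ := 2 * dmin with hB
    set α : ℝ := 2 * dmin / ((dmin : ℝ) - 1) with hα
    set η : X → A → ℝ := fun x a =>
      if a = a0 then B / Δmin ^ 2 else if (x, a) ∈ T then α / Δmin ^ 2 else 0 with hηdef
    have hηnn : ∀ x a, 0 ≤ η x a := by
      intro x a
      rw [hηdef]
      dsimp only
      split_ifs
      · rw [hB]; positivity
      · rw [hα]; positivity
      · exact le_refl _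
    have hηa0 : ∀ y, η y a0 = B / Δmin ^ 2 := by
      intro y; rw [hηdef]; simp
    have hηT : ∀ x a, a ≠ a0 → (x, a) ∈ T → η x a = α / Δmin ^ 2 := by
      intro x a ha hmem
      rw [hηdef]
      dsimp only
      rw [if_neg ha, if_pos hmem]
    have hreg : ∑ x, ∑ a, η x a * (f x (π x) - f x a) = 2 * dmin / Δmin := by
      rw [← Finset.sum_product' (f := fun x a => η x a * (f x (π x) - f x a)),
        Finset.univ_product_univ]
      have hterm : ∀ p : X × A, η p.1 p.2 * (f p.1 (π p.1) - f p.1 p.2) =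
          if p ∈ T then α / Δmin ^ 2 * Δmin else 0 := by
        rintro ⟨x, a⟩
        dsimp only
        by_cases ha : a = a0
        · rw [if_neg (fun h => hTne _ h ha), hfopt x, ha, hfa0 x, sub_self, mul_zero]
        · rw [hfopt x, hfsub x a ha, sub_zero, hηdef]
          dsimp only
          rw [if_neg ha, ite_mul, zero_mul]
      rw [Finset.sum_congr rfl fun p _ => hterm p, Fintype.sum_ite_mem,
        Finset.sum_const, hTcard, nsmul_eq_mul, Nat.cast_sub (by omega : 1 ≤ dmin),
        Nat.cast_one, hα]
      field_simp
    have hfeas : ∀ f' ∈ linClass (fun x a (k : Fin dmin) => ψ x a k.val),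
        (∃ x, ∃ a, a ≠ π x ∧ f' x (π x) < f' x a) →
        1 ≤ ∑ x, ∑ a, η x a * (1 / 2 * (f x a - f' x a) ^ 2) := by
      rintro f' ⟨θ, hθ⟩ ⟨x, a, ha, hlt⟩
      have ha' : a ≠ a0 := by simpa [hπdef] using ha
      rw [hπx x] at hlt
      have hf'opt : ∀ y, f' y a0 = θ ⟨0, h0dmin⟩ := fun y => by
        rw [hθ]; exact hFopt dmin h0dmin θ y
      set t : ℝ := θ ⟨0, h0dmin⟩ with htdef
      rw [hf'opt x] at hlt
      have h2p := two_point (fun y c => η y c * (1 / 2 * (f y c - f' y c) ^ 2))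
        (fun y c => mul_nonneg (hηnn y c) (by positivity)) x a0 a (Ne.symm ha')
      refine le_trans ?_ h2p
      show 1 ≤ η x a0 * (1 / 2 * (f x a0 - f' x a0) ^ 2) +
        η x a * (1 / 2 * (f x a - f' x a) ^ 2)
      by_cases hmem : ∃ k : Fin (dmax - 1), k.val + 1 < dmin ∧ E k = (x, a)
      · obtain ⟨k, hk2, hk⟩ := hmem
        have hf'a : f' x a = θ ⟨k.val + 1, hk2⟩ := by
          rw [hθ]
          have := hFE dmin θ k hk2
          rw [hk] at this
          exact this
        set u : ℝ := θ ⟨k.val + 1, hk2⟩ with hudef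
        rw [hf'a] at hlt
        clear_value u
        clear_value t
        have hmemT : (x, a) ∈ T := (hTmem _).2 ⟨k, by omega, hk⟩
        rw [hηa0 x, hηT x a ha' hmemT, hfa0 x, hf'opt x, hfsub x a ha', hf'a]
        have hkey : ((dmin:ℝ) - 1) * Δmin ^ 2 ≤
            (dmin:ℝ) * ((dmin:ℝ) - 1) * (Δmin - t) ^ 2 + (dmin:ℝ) * u ^ 2 := by
          rcases le_or_gt 0 t with h0 | h0
          · have hu2 : t ^ 2 ≤ u ^ 2 := by nlinarith
            have hmu : 0 ≤ (dmin:ℝ) * (u ^ 2 - t ^ 2) :=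
              mul_nonneg (by positivity) (by linarith)
            have hid : (dmin:ℝ) * ((dmin:ℝ) - 1) * (Δmin - t) ^ 2 + (dmin:ℝ) * t ^ 2 -
                ((dmin:ℝ) - 1) * Δmin ^ 2 = (((dmin:ℝ) - 1) * (Δmin - t) - t) ^ 2 := by
              ring
            nlinarith [sq_nonneg (((dmin:ℝ) - 1) * (Δmin - t) - t)]
          · have h2 : Δmin ^ 2 ≤ (Δmin - t) ^ 2 := by nlinarith
            nlinarith [mul_le_mul_of_nonneg_left h2
                (mul_nonneg (by positivity : (0:ℝ) ≤ (dmin:ℝ)) hm1.le),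
              mul_nonneg (mul_nonneg hm1.le hm1.le) (sq_nonneg Δmin),
              mul_nonneg (by positivity : (0:ℝ) ≤ (dmin:ℝ)) (sq_nonneg u)]
        have hrw : B / Δmin ^ 2 * (1 / 2 * (Δmin - t) ^ 2) +
            α / Δmin ^ 2 * (1 / 2 * (0 - u) ^ 2) =
            ((dmin:ℝ) * ((dmin:ℝ) - 1) * (Δmin - t) ^ 2 + (dmin:ℝ) * u ^ 2) /
              (((dmin:ℝ) - 1) * Δmin ^ 2) := by
          rw [hB, hα]
          field_simp
          ring
        rw [hrw, le_div_iff₀ (by positivity), one_mul]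
        linarith
      · have hf'a : f' x a = 0 := by
          rw [hθ]
          by_cases hr : ∃ k, E k = (x, a)
          · obtain ⟨k, hk⟩ := hr
            have hk2 : dmin ≤ k.val + 1 := by
              by_contra h
              exact hmem ⟨k, by omega, hk⟩
            have := hFE' dmin θ k hk2
            rw [hk] at this
            exact this
          · exact hFoff dmin θ x a ha' (fun k hk => hr ⟨k, hk⟩)
        rw [hf'a] at hlt
        rw [hηa0 x, hfa0 x, hf'opt x]
        have hsnd : 0 ≤ η x a * (1 / 2 * (f x a - f' x a) ^ 2) :=
          mul_nonneg (hηnn x a) (by positivity)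
        have h2 : Δmin ^ 2 ≤ (Δmin - t) ^ 2 := by nlinarith
        have e1 : B / Δmin ^ 2 * (1 / 2 * Δmin ^ 2) = (dmin:ℝ) := by
          rw [hB]; field_simp; try ring
        have e2 : B / Δmin ^ 2 * (1 / 2 * Δmin ^ 2) ≤
            B / Δmin ^ 2 * (1 / 2 * (Δmin - t) ^ 2) := by
          apply mul_le_mul_of_nonneg_left (by linarith)
          rw [hB]; positivity
        linarith
    refine le_trans (sInf_le ⟨η, hηnn, hfeas, rfl⟩) ?_
    exact le_of_eq (by rw [hreg])
  -- the lower bound for the largest representation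
  have lower : ∀ m : ℕ, dmax = m →
      ENNReal.ofReal (dmax / Δmin) ≤
        Complexity f π (linClass (fun x a (k : Fin m) => ψ x a k.val)) := by
    rintro m rfl
    have hdmax3 : (3:ℝ) ≤ (dmax:ℝ) := by exact_mod_cast (by omega : 3 ≤ dmax)
    refine le_sInf ?_
    rintro c ⟨η, hηnn, hcons, rfl⟩
    refine ENNReal.ofReal_le_ofReal ?_
    have hηE : ∀ k : Fin (dmax - 1), 200 / (121 * Δmin ^ 2) ≤ η (E k).1 (E k).2 := by
      intro k
      have hk1 : k.val + 1 < dmax := by have := k.2; omega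
      set θk : Fin dmax → ℝ := fun j =>
        if j.val = 0 then Δmin else if j.val = k.val + 1 then 11 / 10 * Δmin else 0 with hθk
      have hval0 : ∀ y : X, (∑ j : Fin dmax, ψ y a0 j.val * θk j) = Δmin := by
        intro y
        rw [hFopt dmax (by omega) θk y, hθk]
        simp
      have hvalk : (∑ j : Fin dmax, ψ (E k).1 (E k).2 j.val * θk j) = 11 / 10 * Δmin := by
        rw [hFE dmax θk k hk1, hθk]
        show (if k.val + 1 = 0 then Δmin
          else if k.val + 1 = k.val + 1 then 11 / 10 * Δmin else 0) = 11 / 10 * Δmin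
        rw [if_neg (by omega), if_pos rfl]
      have hvalother : ∀ p : X × A, p ≠ E k →
          (∑ j : Fin dmax, ψ p.1 p.2 j.val * θk j) = f p.1 p.2 := by
        rintro ⟨y, b⟩ hp
        dsimp only
        by_cases hb : b = a0
        · rw [hb, hval0 y, hfa0 y]
        · rw [hfsub y b hb]
          by_cases hr : ∃ j, E j = (y, b)
          · obtain ⟨j, hj⟩ := hr
            have hjk : j ≠ k := fun h => hp (by rw [← hj, h])
            have hj1 : j.val + 1 < dmax := by have := j.2; omega
            have hsum := hFE dmax θk j hj1
            rw [hj] at hsum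
            rw [hsum, hθk]
            show (if j.val + 1 = 0 then Δmin
              else if j.val + 1 = k.val + 1 then 11 / 10 * Δmin else 0) = 0
            rw [if_neg (by omega), if_neg (fun h => hjk (Fin.ext (by omega)))]
          · exact hFoff dmax θk y b hb (fun j hj => hr ⟨j, hj⟩)
      have hcon := hcons (fun x a => ∑ j : Fin dmax, ψ x a j.val * θk j)
        ⟨θk, fun x a => rfl⟩
        ⟨(E k).1, (E k).2, by simpa [hπdef] using hEne k, by
          show (∑ j : Fin dmax, ψ (E k).1 (π (E k).1) j.val * θk j) <
            ∑ j : Fin dmax, ψ (E k).1 (E k).2 j.val * θk j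
          rw [hπx (E k).1, hval0 (E k).1, hvalk]
          linarith⟩
      have hsum : (∑ x, ∑ a, η x a *
          (1 / 2 * (f x a - ∑ j : Fin dmax, ψ x a j.val * θk j) ^ 2)) =
          η (E k).1 (E k).2 * (1 / 2 * ((0:ℝ) - 11 / 10 * Δmin) ^ 2) := by
        rw [← Finset.sum_product' (f := fun x a => η x a *
          (1 / 2 * (f x a - ∑ j : Fin dmax, ψ x a j.val * θk j) ^ 2)),
          Finset.univ_product_univ]
        rw [Finset.sum_eq_single (E k)]
        · rw [hvalk, hfsub (E k).1 (E k).2 (hEne k)]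
        · intro p _ hp
          rw [hvalother p hp, sub_self]
          simp
        · intro h
          exact absurd (Finset.mem_univ _) h
      rw [hsum] at hcon
      rw [div_le_iff₀ (by positivity)]
      nlinarith [hcon, sq_nonneg Δmin, hΔ]
    have hterm : ∀ k : Fin (dmax - 1),
        η (E k).1 (E k).2 * (f (E k).1 (π (E k).1) - f (E k).1 (E k).2) =
          η (E k).1 (E k).2 * Δmin := by
      intro k
      rw [hfopt (E k).1, hfsub (E k).1 (E k).2 (hEne k), sub_zero]
    calc (dmax:ℝ) / Δmin
        ≤ ((dmax:ℝ) - 1) * (200 / (121 * Δmin ^ 2) * Δmin) := by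
          rw [div_le_iff₀ hΔ]
          have h1 : ((dmax:ℝ) - 1) * (200 / (121 * Δmin ^ 2) * Δmin) * Δmin =
              ((dmax:ℝ) - 1) * 200 / 121 := by
            field_simp
          rw [h1]
          linarith
      _ ≤ ∑ k : Fin (dmax - 1), η (E k).1 (E k).2 * Δmin := by
          have hb := Finset.card_nsmul_le_sum Finset.univ
            (fun k : Fin (dmax - 1) => η (E k).1 (E k).2 * Δmin)
            (200 / (121 * Δmin ^ 2) * Δmin)
            (fun k _ => mul_le_mul_of_nonneg_right (hηE k) hΔ.le)
          rw [Finset.card_univ, Fintype.card_fin, nsmul_eq_mul,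
            Nat.cast_sub (by omega : 1 ≤ dmax), Nat.cast_one] at hb
          exact hb
      _ = ∑ p ∈ Finset.image E Finset.univ,
            η p.1 p.2 * (f p.1 (π p.1) - f p.1 p.2) := by
          rw [Finset.sum_image (fun a _ b _ h => hEinj h)]
          exact (Finset.sum_congr rfl fun k _ => hterm k).symm
      _ ≤ ∑ p : X × A, η p.1 p.2 * (f p.1 (π p.1) - f p.1 p.2) := by
          apply Finset.sum_le_sum_of_subset_of_nonneg (Finset.subset_univ _)
          intro p _ _
          by_cases hb : p.2 = a0
          · rw [hfopt p.1, hb, hfa0 p.1, sub_self, mul_zero]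
          · apply mul_nonneg (hηnn _ _)
            rw [hfopt p.1, hfsub p.1 p.2 hb, sub_zero]
            exact hΔ.le
      _ = ∑ x, ∑ a, η x a * (f x (π x) - f x a) := by
          rw [← Finset.sum_product' (f := fun x a => η x a * (f x (π x) - f x a)),
            Finset.univ_product_univ]
  -- dimensions
  set d : Fin N → ℕ := fun i => if i.val = N - 1 then dmax else dmin + i.val with hddef
  have hd0 : ∀ h : 0 < N, d ⟨0, h⟩ = dmin := by
    intro h
    show (if 0 = N - 1 then dmax else dmin + 0) = dmin
    rw [if_neg (by omega), Nat.add_zero]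
  have hdlast : ∀ h : N - 1 < N, d ⟨N - 1, h⟩ = dmax := by
    intro h
    show (if N - 1 = N - 1 then dmax else _) = dmax
    rw [if_pos rfl]
  refine ⟨f, π, d, fun i x a k => ψ x a k.val, ?_, ?_, ?_, hd0 _, hdlast _, ?_, ?_, ?_, ?_⟩
  · intro x a ha
    have ha' : a ≠ a0 := by simpa [hπdef] using ha
    rw [hfopt x, hfsub x a ha']
    exact hΔ
  · intro x a ha
    have ha' : a ≠ a0 := by simpa [hπdef] using ha
    rw [hfopt x, hfsub x a ha', sub_zero]
  · intro i j hij
    have hi := i.2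
    have hj := j.2
    have hij' : i.val < j.val := hij
    show (if i.val = N - 1 then dmax else dmin + i.val) <
      (if j.val = N - 1 then dmax else dmin + j.val)
    split_ifs <;> omega
  · intro i j _ x a k hk hk'
    rfl
  · intro i
    have hdi : 0 < d i := by
      show 0 < (if i.val = N - 1 then dmax else dmin + i.val)
      split <;> omega
    refine ⟨fun j => if j.val = 0 then Δmin else 0, fun x a => ?_⟩
    have : ∀ j : Fin (d i), ψ x a j.val * (if j.val = 0 then Δmin else 0) =
        if j = ⟨0, hdi⟩ then ψ x a 0 * Δmin else 0 := by
      intro j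
      by_cases hj : j = ⟨0, hdi⟩
      · subst hj; rw [if_pos rfl, if_pos rfl]
      · rw [if_neg (fun h0 => hj (Fin.ext h0)), mul_zero, if_neg hj]
    rw [Finset.sum_congr rfl fun j _ => this j, Fintype.sum_ite_eq', hψ0]
    by_cases ha : a = a0
    · rw [hfdef]; simp [ha]
    · rw [hfsub x a ha, if_neg ha, zero_mul]
  · exact upper _ (hd0 _).symm
  · exact lower _ (hdlast _).symm
end

section
/- For every ε ∈ (0,1) there exist a single-context bandit instance with 4 arms, a reward function f* : 𝒳 × 𝒜 → ℝ with a unique optimal arm, and a set Φ = {φ_1, φ_2} of two 3-dimensional representations, both realizable for f* (f* ∈ ℱ_{φ_1} ∩ ℱ_{φ_2}), such that C(f*, ℱ_Φ^FR) ≤ 2 while C(f*, ℱ_{φ_1}) ≥ 2/ε and C(f*, ℱ_{φ_2}) ≥ 2/ε. -/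
open scoped ENNReal

lemma caseB_aux (c t M : ℝ) (h : c + t < -c + M * t) :
    2 ≤ 13 * (1 - c - t) ^ 2 + (1 - c + M * t) ^ 2 := by
  nlinarith [sq_nonneg (13 * (1 - c - t) - (1 - c + M * t)), h]

lemma caseA_aux (ε M c t : ℝ) (hε0 : 0 < ε) (hε1 : ε < 1) (hM : M * ε = 4)
    (h : c + t < (1 - ε) * c) :
    2 ≤ 13 * (1 - c - t) ^ 2 + (1 - c + M * t) ^ 2 := by
  by_contra hcon
  push_neg at hcon
  set a := 1 - c - t with ha
  set b := 1 - c + M * t with hb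
  have hεb : ε * b = ε * (1 - c) + 4 * t := by
    rw [hb]; linear_combination t * hM
  have h1 : ε < ε * (1 - c) - t := by nlinarith
  have h5a : 5 * a < 2 := by nlinarith [sq_nonneg b, sq_nonneg (5 * a - 2)]
  have hbm : -2 < b := by nlinarith [sq_nonneg a]
  have key : 5 * ε * a - (1 - ε) * (ε * b) = (4 + ε) * (ε * (1 - c) - t) := by
    rw [hεb, ha]; ring
  have hL : (4 + ε) * ε < 5 * ε * a - (1 - ε) * (ε * b) := by
    rw [key]; nlinarith [h1]
  have h2 : 5 * ε * a < 2 * ε := by nlinarith [h5a, hε0]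
  have h3 : -((1 - ε) * (ε * b)) < (1 - ε) * (2 * ε) := by
    have hb' : -(ε * b) < ε * 2 := by nlinarith [hbm, hε0]
    nlinarith [hb', hε1]
  nlinarith [hL, h2, h3, sq_nonneg ε, hε0]

/-- key sqrt lemma: if for all t > ε we have 2 ≤ q * t^2 (q ≥ 0), then 2 ≤ q * ε^2. -/
lemma sqrt_limit_aux (ε q : ℝ) (hε0 : 0 < ε) (hq : 0 ≤ q)
    (h : ∀ t, ε < t → 2 ≤ q * t ^ 2) : 2 ≤ q * ε ^ 2 := by
  by_contra hcon
  push_neg at hcon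
  rcases eq_or_lt_of_le hq with h0 | h0
  · have := h (ε + 1) (by linarith)
    nlinarith [this]
  · set r := Real.sqrt (2 / q) with hr
    have hr0 : 0 ≤ r := Real.sqrt_nonneg _
    have hr2 : r ^ 2 = 2 / q := Real.sq_sqrt (by positivity)
    have hre : q * r ^ 2 = 2 := by rw [hr2]; field_simp
    have hεr : ε < r := by
      have h2 : ε ^ 2 < r ^ 2 := by
        rw [hr2, lt_div_iff₀ h0]; nlinarith
      nlinarith [h2, hε0, hr0]
    have hkey := h ((ε + r) / 2) (by linarith)
    have htr : ((ε + r) / 2) ^ 2 < r ^ 2 := by nlinarith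
    nlinarith [hkey, hre, mul_lt_mul_of_pos_left htr h0]

/-- Fully-realizable representation learning can be arbitrarily easier than
learning with either single representation: for any `ε ∈ (0,1)` there is a
4-armed single-context instance with two realizable 3-dimensional
representations such that `C(f, ℱ_Φ^FR) ≤ 2` while `C(f, ℱ_{φ_i}) ≥ 2/ε`. -/
theorem exists_fully_realizable_gap (ε : ℝ) (hε0 : 0 < ε) (hε1 : ε < 1) :
    ∃ (f : Fin 1 → Fin 4 → ℝ) (π : Fin 1 → Fin 4)
      (φ1 φ2 : Fin 1 → Fin 4 → Fin 3 → ℝ),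
      UniqueOpt f π ∧
      f ∈ linClass φ1 ∧ f ∈ linClass φ2 ∧
      Complexity f π (linClass φ1 ∩ linClass φ2) ≤ 2 ∧
      ENNReal.ofReal (2 / ε) ≤ Complexity f π (linClass φ1) ∧
      ENNReal.ofReal (2 / ε) ≤ Complexity f π (linClass φ2) := by
  have hεne : ε ≠ 0 := ne_of_gt hε0
  set M : ℝ := 4 / ε with hMdef
  have hMpos : 0 < M := by positivity
  have hMe : M * ε = 4 := by rw [hMdef]; exact div_mul_cancel₀ 4 hεne
  refine ⟨fun _ => ![1, 1-ε, 1-ε, -1], fun _ => 0,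
    fun _ a => ![![1, 1-ε, 1-ε, -1] a, ![0, 1, 0, 0] a, ![1, 0, 0, M] a],
    fun _ a => ![![1, 1-ε, 1-ε, -1] a, ![0, 0, 1, 0] a, ![1, 0, 0, M] a],
    ?_, ?_, ?_, ?_, ?_, ?_⟩
  · -- UniqueOpt
    intro x a ha
    fin_cases a <;> simp_all <;> linarith
  · -- f ∈ linClass φ1
    exact ⟨![1, 0, 0], by intro x a; fin_cases a <;>
      simp [Fin.sum_univ_three]⟩
  · -- f ∈ linClass φ2
    exact ⟨![1, 0, 0], by intro x a; fin_cases a <;>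
      simp [Fin.sum_univ_three]⟩
  · -- upper bound ≤ 2
    apply sInf_le
    refine ⟨fun _ => ![13, 0, 0, 1], ?_, ?_, ?_⟩
    · intro x a; fin_cases a <;> norm_num
    · rintro f' ⟨⟨θ, hθ⟩, ⟨θ', hθ'⟩⟩ ⟨x, aa, haa, hlt⟩
      have e0 := hθ 0 0
      have e1 := hθ 0 1
      have e2 := hθ 0 2
      have e3 := hθ 0 3
      have e0' := hθ' 0 0
      have e1' := hθ' 0 1
      have e3' := hθ' 0 3
      simp [Fin.sum_univ_three] at e0 e1 e2 e3 e0' e1' e3'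
      have ht2 : θ 2 = θ' 2 := by
        have h1 : (1 + M) * (θ 2 - θ' 2) = 0 := by
          linear_combination e0' - e0 + e3' - e3
        rcases mul_eq_zero.mp h1 with h | h
        · linarith
        · linarith
      have ht0 : θ 0 = θ' 0 := by
        have := e0.symm.trans e0'
        linarith
      have ht1 : θ 1 = 0 := by linear_combination e1' - e1 - (1 - ε) * ht0
      have hx : x = 0 := Subsingleton.elim x 0
      subst hx
      simp only [] at haa hlt
      have goal2 : ∀ h2 : 2 ≤ 13 * (1 - θ 0 - θ 2) ^ 2 + (1 - θ 0 + M * θ 2) ^ 2,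
          (1:ℝ) ≤ ∑ x : Fin 1, ∑ a : Fin 4,
            (fun _ => ![13, 0, 0, 1]) x a *
              (1 / 2 * ((fun _ => ![1, 1 - ε, 1 - ε, -1]) x a - f' x a) ^ 2) := by
        intro h2
        simp only [Fin.sum_univ_four, Fin.sum_univ_one]
        simp
        rw [e0, e3]
        nlinarith [h2]
      apply goal2
      rw [e0] at hlt
      fin_cases aa
      · exact absurd rfl haa
      · have hlt2 : θ 0 + θ 2 < f' 0 1 := hlt
        rw [e1, ht1, add_zero] at hlt2
        exact caseA_aux ε M (θ 0) (θ 2) hε0 hε1 hMe hlt2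
      · have hlt2 : θ 0 + θ 2 < f' 0 2 := hlt
        rw [e2] at hlt2
        exact caseA_aux ε M (θ 0) (θ 2) hε0 hε1 hMe hlt2
      · have hlt2 : θ 0 + θ 2 < f' 0 3 := hlt
        rw [e3] at hlt2
        exact caseB_aux (θ 0) (θ 2) M hlt2
    · show (2:ℝ≥0∞) = _
      have hsum : (∑ x : Fin 1, ∑ a : Fin 4, (fun _ => ![(13:ℝ), 0, 0, 1]) x a *
          ((fun _ => ![1, 1 - ε, 1 - ε, -1]) x ((fun _ => (0:Fin 4)) x) -
            (fun _ => ![1, 1 - ε, 1 - ε, -1]) x a)) = 2 := by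
        simp [Fin.sum_univ_four]
        ring
      rw [hsum]
      norm_num
  · -- lower bound φ1
    apply le_sInf
    rintro C ⟨η, hpos, hcons, rfl⟩
    apply ENNReal.ofReal_le_ofReal
    have hkey : ∀ t : ℝ, ε < t → 2 ≤ η 0 1 * t ^ 2 := by
      intro t ht
      have hmem : (fun (_ : Fin 1) (a : Fin 4) => ![1, 1-ε+t, 1-ε, -1] a) ∈
          linClass (fun (_ : Fin 1) (a : Fin 4) =>
            ![![1, 1-ε, 1-ε, -1] a, ![0, 1, 0, 0] a, ![1, 0, 0, M] a]) :=
        ⟨![1, t, 0], by intro x a; fin_cases a <;> simp [Fin.sum_univ_three]⟩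
      have hc := hcons _ hmem ⟨0, 1, by norm_num, by simp; linarith⟩
      simp [Fin.sum_univ_four] at hc
      nlinarith [hc]
    have h2 : 2 ≤ η 0 1 * ε ^ 2 := sqrt_limit_aux ε (η 0 1) hε0 (hpos 0 1) hkey
    simp only [Fin.sum_univ_one, Fin.sum_univ_four]
    norm_num
    rw [div_le_iff₀ hε0]
    change 2 ≤ (η 0 1 * ε + η 0 2 * (1 - (1 - ε)) + η 0 3 * (1 - -1)) * ε
    nlinarith [h2, mul_nonneg (mul_nonneg (hpos 0 2) hε0.le) hε0.le,
      mul_nonneg (mul_nonneg (hpos 0 3) hε0.le) hε0.le, hpos 0 0]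
  · -- lower bound φ2
    apply le_sInf
    rintro C ⟨η, hpos, hcons, rfl⟩
    apply ENNReal.ofReal_le_ofReal
    have hkey : ∀ t : ℝ, ε < t → 2 ≤ η 0 2 * t ^ 2 := by
      intro t ht
      have hmem : (fun (_ : Fin 1) (a : Fin 4) => ![1, 1-ε, 1-ε+t, -1] a) ∈
          linClass (fun (_ : Fin 1) (a : Fin 4) =>
            ![![1, 1-ε, 1-ε, -1] a, ![0, 0, 1, 0] a, ![1, 0, 0, M] a]) :=
        ⟨![1, t, 0], by intro x a; fin_cases a <;> simp [Fin.sum_univ_three]⟩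
      have hc := hcons _ hmem ⟨0, 2, by decide, by simp; linarith⟩
      simp [Fin.sum_univ_four] at hc
      nlinarith [hc]
    have h2 : 2 ≤ η 0 2 * ε ^ 2 := sqrt_limit_aux ε (η 0 2) hε0 (hpos 0 2) hkey
    simp only [Fin.sum_univ_one, Fin.sum_univ_four]
    norm_num
    rw [div_le_iff₀ hε0]
    change 2 ≤ (η 0 1 * ε + η 0 2 * (1 - (1 - ε)) + η 0 3 * (1 - -1)) * ε
    nlinarith [h2, mul_nonneg (mul_nonneg (hpos 0 1) hε0.le) hε0.le,
      mul_nonneg (mul_nonneg (hpos 0 3) hε0.le) hε0.le, hpos 0 0]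
end

section
/- Let φ* be a d-dimensional representation whose features span ℝ^d (span{φ*(x,a) : x ∈ 𝒳, a ∈ 𝒜} = ℝ^d), and let f* ∈ ℱ_{φ*} have a unique optimal arm π* in every context. Then C(f*, ℱ_{φ*}) equals the value of the following optimization problem: the infimum, over allocations η such that V_η(φ*) := Σ_{x,a} η(x,a)·φ*(x,a)·φ*(x,a)ᵀ is invertible, of Σ_{x,a} η(x,a)·Δ_{f*}(x,a), subject to Δ_{f*}(x,a)² / (z(x,a)ᵀ V_η(φ*)⁻¹ z(x,a)) ≥ 2 for every x ∈ 𝒳 and a ≠ π*(x), where z(x,a) := φ*(x,π*(x)) − φ*(x,a). -/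
open scoped ENNReal

open Matrix

section Aux

variable {X A : Type*} [Fintype X] [Fintype A] {d : ℕ}

lemma vecMulVec_mulVec' (u w : Fin d → ℝ) :
    Matrix.vecMulVec u u *ᵥ w = (u ⬝ᵥ w) • u := by
  ext i
  simp only [Matrix.mulVec, dotProduct, vecMulVec_apply, Pi.smul_apply, smul_eq_mul,
    Finset.sum_mul]
  exact Finset.sum_congr rfl fun j _ => by ring

lemma quadForm_eq (φ : X → A → Fin d → ℝ) (η : X → A → ℝ) (w : Fin d → ℝ) :
    w ⬝ᵥ (∑ x, ∑ a, η x a • Matrix.vecMulVec (φ x a) (φ x a)) *ᵥ w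
      = ∑ x, ∑ a, η x a * (φ x a ⬝ᵥ w) ^ 2 := by
  let L : Matrix (Fin d) (Fin d) ℝ →ₗ[ℝ] ℝ :=
    { toFun := fun M => w ⬝ᵥ M *ᵥ w
      map_add' := fun M N => by simp [Matrix.add_mulVec, dotProduct_add]
      map_smul' := fun c M => by simp [Matrix.smul_mulVec, dotProduct_smul] }
  show L (∑ x, ∑ a, η x a • Matrix.vecMulVec (φ x a) (φ x a)) = _
  rw [map_sum]
  refine Finset.sum_congr rfl fun x _ => ?_
  rw [map_sum]
  refine Finset.sum_congr rfl fun a _ => ?_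
  show w ⬝ᵥ (η x a • Matrix.vecMulVec (φ x a) (φ x a)) *ᵥ w = _
  rw [Matrix.smul_mulVec, dotProduct_smul, vecMulVec_mulVec', dotProduct_smul,
    dotProduct_comm, smul_eq_mul, smul_eq_mul, sq]

lemma Vmat_sym (φ : X → A → Fin d → ℝ) (η : X → A → ℝ) :
    (∑ x, ∑ a, η x a • Matrix.vecMulVec (φ x a) (φ x a))ᵀ
      = ∑ x, ∑ a, η x a • Matrix.vecMulVec (φ x a) (φ x a) := by
  ext i j
  simp only [Matrix.transpose_apply, Matrix.sum_apply, Matrix.smul_apply, vecMulVec_apply,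
    smul_eq_mul]
  exact Finset.sum_congr rfl fun x _ => Finset.sum_congr rfl fun a _ => by ring

lemma cs_ineq {n : Type*} [Fintype n] {M : Matrix n n ℝ} (hsym : Mᵀ = M)
    (hpsd : ∀ v : n → ℝ, 0 ≤ v ⬝ᵥ M *ᵥ v) (u v : n → ℝ) :
    (u ⬝ᵥ M *ᵥ v) ^ 2 ≤ (u ⬝ᵥ M *ᵥ u) * (v ⬝ᵥ M *ᵥ v) := by
  have hswap : v ⬝ᵥ M *ᵥ u = u ⬝ᵥ M *ᵥ v := by
    rw [dotProduct_mulVec, ← mulVec_transpose, hsym, dotProduct_comm]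
  have key : ∀ t : ℝ,
      0 ≤ (v ⬝ᵥ M *ᵥ v) * (t * t) + (2 * (u ⬝ᵥ M *ᵥ v)) * t + u ⬝ᵥ M *ᵥ u := by
    intro t
    have h := hpsd (u + t • v)
    simp only [Matrix.mulVec_add, dotProduct_add, add_dotProduct, Matrix.mulVec_smul,
      dotProduct_smul, smul_dotProduct, smul_eq_mul, hswap] at h
    nlinarith [h]
  have hd := discrim_le_zero key
  rw [discrim] at hd
  nlinarith [hd]

lemma exists_dot_ne (φ : X → A → Fin d → ℝ)
    (hspan : Submodule.span ℝ (Set.range fun p : X × A => φ p.1 p.2) = ⊤)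
    {u : Fin d → ℝ} (hu : u ≠ 0) : ∃ p : X × A, φ p.1 p.2 ⬝ᵥ u ≠ 0 := by
  by_contra h
  push_neg at h
  let ℓ : (Fin d → ℝ) →ₗ[ℝ] ℝ :=
    { toFun := fun v => v ⬝ᵥ u
      map_add' := fun a b => add_dotProduct a b u
      map_smul' := fun c a => by simp [smul_dotProduct] }
  have hker : Submodule.span ℝ (Set.range fun p : X × A => φ p.1 p.2) ≤ LinearMap.ker ℓ := by
    rw [Submodule.span_le]
    rintro v ⟨p, rfl⟩
    exact h p
  rw [hspan] at hker
  have h0 : u ⬝ᵥ u = 0 := hker (Submodule.mem_top : u ∈ (⊤ : Submodule ℝ (Fin d → ℝ)))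
  exact hu (dotProduct_self_eq_zero.mp h0)

lemma sum_pos_of_dot_ne (φ : X → A → Fin d → ℝ)
    (hspan : Submodule.span ℝ (Set.range fun p : X × A => φ p.1 p.2) = ⊤)
    {u : Fin d → ℝ} (hu : u ≠ 0) :
    0 < ∑ x, ∑ a, (φ x a ⬝ᵥ u) ^ 2 := by
  obtain ⟨p, hp⟩ := exists_dot_ne φ hspan hu
  have hinner : 0 < ∑ a, (φ p.1 a ⬝ᵥ u) ^ 2 :=
    Finset.sum_pos' (fun _ _ => sq_nonneg _) ⟨p.2, Finset.mem_univ _, by positivity⟩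
  exact Finset.sum_pos' (fun _ _ => Finset.sum_nonneg fun _ _ => sq_nonneg _)
    ⟨p.1, Finset.mem_univ _, hinner⟩

lemma herm_V (φ : X → A → Fin d → ℝ) (η : X → A → ℝ) :
    (∑ x, ∑ a, η x a • Matrix.vecMulVec (φ x a) (φ x a)).IsHermitian := by
  have h := Vmat_sym φ η
  unfold Matrix.IsHermitian
  ext i j
  simp only [Matrix.conjTranspose_apply, star_trivial]
  exact congrFun (congrFun h i) j

end Aux

/-- The complexity of a contextual linear bandit with a single realizable
representation `φ` whose features span `ℝ^d` (Corollary 1): the infimum of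
the regret over allocations with invertible design matrix, subject to
`Δ(x,a)² / ‖φ(x,π*(x)) − φ(x,a)‖²_{V_η⁻¹} ≥ 2` for all sub-optimal `(x,a)`. -/
theorem complexity_single_representation
    {X A : Type*} [Fintype X] [Fintype A] [Nonempty X] [Nonempty A]
    {d : ℕ} (φ : X → A → Fin d → ℝ)
    (hspan : Submodule.span ℝ (Set.range fun p : X × A => φ p.1 p.2) = ⊤)
    (f : X → A → ℝ) (π : X → A) (hπ : UniqueOpt f π)
    (hf : f ∈ linClass φ) :
    Complexity f π (linClass φ) =
      sInf { c : ℝ≥0∞ | ∃ η : X → A → ℝ,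
        (∀ x a, 0 ≤ η x a) ∧
        IsUnit (∑ x, ∑ a, η x a • Matrix.vecMulVec (φ x a) (φ x a)) ∧
        (∀ x a, a ≠ π x →
          2 ≤ (f x (π x) - f x a) ^ 2 /
            ((fun j => φ x (π x) j - φ x a j) ⬝ᵥ
              (∑ x', ∑ a',
                η x' a' • Matrix.vecMulVec (φ x' a') (φ x' a'))⁻¹.mulVec
                (fun j => φ x (π x) j - φ x a j))) ∧
        c = ENNReal.ofReal (∑ x, ∑ a, η x a * (f x (π x) - f x a)) } := by
  obtain ⟨θ, hθ⟩ := hf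
  have hfd : ∀ x a, f x a = φ x a ⬝ᵥ θ := fun x a => hθ x a
  have hgap : ∀ x a, 0 ≤ f x (π x) - f x a := by
    intro x a
    by_cases h : a = π x
    · subst h; simp
    · exact le_of_lt (sub_pos.2 (hπ x a h))
  have hzdot : ∀ (x : X) (a : A) (θ₀ : Fin d → ℝ),
      (fun j => φ x (π x) j - φ x a j) ⬝ᵥ θ₀ = φ x (π x) ⬝ᵥ θ₀ - φ x a ⬝ᵥ θ₀ := by
    intro x a θ₀
    exact sub_dotProduct _ _ _
  unfold Complexity
  refine le_antisymm (sInf_le_sInf ?_) (le_sInf ?_)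
  · -- RHS set ⊆ LHS set
    rintro c ⟨η, hnn, hunit, hcon, rfl⟩
    refine ⟨η, hnn, ?_, rfl⟩
    rintro f' ⟨θ', hθ'⟩ ⟨x, a, hax, hlt⟩
    have hf'd : ∀ x a, f' x a = φ x a ⬝ᵥ θ' := fun x a => hθ' x a
    have hc := hcon x a hax
    set M := ∑ x, ∑ a, η x a • Matrix.vecMulVec (φ x a) (φ x a) with hM
    set w := θ - θ' with hw
    have hdiff : ∀ x' a', f x' a' - f' x' a' = φ x' a' ⬝ᵥ w := by
      intro x' a'
      rw [hfd, hf'd, hw, dotProduct_sub]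
    have hpsd : ∀ v : Fin d → ℝ, 0 ≤ v ⬝ᵥ M *ᵥ v := by
      intro v
      rw [hM, quadForm_eq]
      exact Finset.sum_nonneg fun x' _ => Finset.sum_nonneg fun a' _ =>
        mul_nonneg (hnn x' a') (sq_nonneg _)
    have hherm : M.IsHermitian := herm_V φ η
    have hdet : IsUnit M.det := (Matrix.isUnit_iff_isUnit_det M).mp hunit
    have hMpd : M.PosDef := by
      refine Matrix.PosDef.of_dotProduct_mulVec_pos hherm fun v hv => ?_
      rcases (hpsd v).eq_or_lt with h0 | h0
      · exfalso
        have hps : M.PosSemidef :=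
          Matrix.PosSemidef.of_dotProduct_mulVec_nonneg hherm fun v => by simpa using hpsd v
        have h1 : M *ᵥ v = 0 := (hps.dotProduct_mulVec_zero_iff v).mp (by simpa using h0.symm)
        have h2 : v = 0 := by
          have h3 := congrArg (fun y => M⁻¹ *ᵥ y) h1
          simpa [Matrix.mulVec_mulVec, Matrix.nonsing_inv_mul M hdet] using h3
        exact hv h2
      · simpa using h0
    have hMinv : (M⁻¹).PosDef := hMpd.inv
    set z : Fin d → ℝ := fun j => φ x (π x) j - φ x a j with hzdef
    set Δ := f x (π x) - f x a with hΔdef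
    have hΔ : 0 < Δ := sub_pos.2 (hπ x a hax)
    have hzθ : z ⬝ᵥ θ = Δ := by
      rw [hzdef, hzdot x a θ, ← hfd x (π x), ← hfd x a]
    have hzne : z ≠ 0 := by
      intro h
      rw [h, zero_dotProduct] at hzθ
      exact absurd hzθ.symm (ne_of_gt hΔ)
    set g := z ⬝ᵥ M⁻¹ *ᵥ z with hgdef
    have hg : 0 < g := by simpa using hMinv.dotProduct_mulVec_pos hzne
    have h2g : 2 * g ≤ Δ ^ 2 := (le_div_iff₀ hg).mp hc
    set u := M⁻¹ *ᵥ z with hu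
    have hMu : M *ᵥ u = z := by
      rw [hu, Matrix.mulVec_mulVec, Matrix.mul_nonsing_inv M hdet, Matrix.one_mulVec]
    have hsym : Mᵀ = M := Vmat_sym φ η
    have huMw : u ⬝ᵥ M *ᵥ w = z ⬝ᵥ w := by
      rw [dotProduct_mulVec, ← hsym, Matrix.vecMul_transpose, hMu]
    have huMu : u ⬝ᵥ M *ᵥ u = g := by
      rw [dotProduct_mulVec, ← hsym, Matrix.vecMul_transpose, hMu, hgdef, hu]
    have hzθ' : z ⬝ᵥ θ' = f' x (π x) - f' x a := by
      rw [hzdef, hzdot x a θ', ← hf'd x (π x), ← hf'd x a]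
    have hzw : Δ < z ⬝ᵥ w := by
      rw [hw, dotProduct_sub, hzθ, hzθ']
      linarith
    have hcs := cs_ineq hsym hpsd u w
    rw [huMw, huMu] at hcs
    have hsq : Δ ^ 2 ≤ (z ⬝ᵥ w) ^ 2 := by nlinarith [hzw, hΔ]
    have hwMw : 2 ≤ w ⬝ᵥ M *ᵥ w := by nlinarith [hcs, hsq, h2g, hg]
    rw [hM, quadForm_eq] at hwMw
    have hsum : ∑ x', ∑ a', η x' a' * (1 / 2 * (f x' a' - f' x' a') ^ 2)
        = 1 / 2 * ∑ x', ∑ a', η x' a' * (φ x' a' ⬝ᵥ w) ^ 2 := by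
      rw [Finset.mul_sum]
      refine Finset.sum_congr rfl fun x' _ => ?_
      rw [Finset.mul_sum]
      refine Finset.sum_congr rfl fun a' _ => ?_
      rw [hdiff]
      ring
    rw [hsum]
    linarith
  · -- LHS inf ≥ RHS inf
    rintro c ⟨η, hnn, hfeas, rfl⟩
    set R := ∑ x, ∑ a, η x a * (f x (π x) - f x a) with hR
    set S := ∑ x, ∑ a, (f x (π x) - f x a) with hS
    have hS0 : 0 ≤ S :=
      Finset.sum_nonneg fun x _ => Finset.sum_nonneg fun a _ => hgap x a
    apply ENNReal.le_of_forall_pos_le_add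
    intro ε hε _
    set δ : ℝ := (ε : ℝ) / (S + 1) with hδdef
    have hδ : 0 < δ := div_pos (by exact_mod_cast hε) (by linarith)
    set η' : X → A → ℝ := fun x a => η x a + δ with hη'
    set M' := ∑ x, ∑ a, η' x a • Matrix.vecMulVec (φ x a) (φ x a) with hM'
    have hq' : ∀ v : Fin d → ℝ, v ⬝ᵥ M' *ᵥ v
        = (∑ x, ∑ a, η x a * (φ x a ⬝ᵥ v) ^ 2) + δ * ∑ x, ∑ a, (φ x a ⬝ᵥ v) ^ 2 := by
      intro v
      rw [hM', quadForm_eq, Finset.mul_sum, ← Finset.sum_add_distrib]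
      refine Finset.sum_congr rfl fun x _ => ?_
      rw [Finset.mul_sum, ← Finset.sum_add_distrib]
      refine Finset.sum_congr rfl fun a _ => ?_
      rw [hη']
      ring
    have hqnn : ∀ v : Fin d → ℝ, 0 ≤ ∑ x, ∑ a, η x a * (φ x a ⬝ᵥ v) ^ 2 := fun v =>
      Finset.sum_nonneg fun x _ => Finset.sum_nonneg fun a _ =>
        mul_nonneg (hnn x a) (sq_nonneg _)
    have hMpd : M'.PosDef := by
      refine Matrix.PosDef.of_dotProduct_mulVec_pos (herm_V φ η') fun v hv => ?_
      have h1 := sum_pos_of_dot_ne φ hspan hv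
      have h2 := hqnn v
      simp only [star_trivial]
      rw [hq' v]
      nlinarith [h1, h2, hδ]
    have hdet : IsUnit M'.det := (Matrix.isUnit_iff_isUnit_det M').mp hMpd.isUnit
    have hsym : M'ᵀ = M' := Vmat_sym φ η'
    refine le_trans (sInf_le ⟨η', fun x a => add_nonneg (hnn x a) hδ.le, hMpd.isUnit, ?_, rfl⟩) ?_
    · -- the constraint
      intro x a hax
      set z : Fin d → ℝ := fun j => φ x (π x) j - φ x a j with hzdef
      set Δ := f x (π x) - f x a with hΔdef
      have hΔ : 0 < Δ := sub_pos.2 (hπ x a hax)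
      have hzθ : z ⬝ᵥ θ = Δ := by
        rw [hzdef, hzdot x a θ, ← hfd x (π x), ← hfd x a]
      have hzne : z ≠ 0 := by
        intro h
        rw [h, zero_dotProduct] at hzθ
        exact absurd hzθ.symm (ne_of_gt hΔ)
      set g := z ⬝ᵥ M'⁻¹ *ᵥ z with hgdef
      have hg : 0 < g := by simpa using hMpd.inv.dotProduct_mulVec_pos hzne
      set w : Fin d → ℝ := (Δ / g) • (M'⁻¹ *ᵥ z) with hwdef
      have hMw : M' *ᵥ w = (Δ / g) • z := by
        rw [hwdef, Matrix.mulVec_smul, Matrix.mulVec_mulVec,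
          Matrix.mul_nonsing_inv M' hdet, Matrix.one_mulVec]
      have hzw : z ⬝ᵥ w = Δ := by
        rw [hwdef, dotProduct_smul, ← hgdef, smul_eq_mul, div_mul_cancel₀ _ (ne_of_gt hg)]
      have hwMw : w ⬝ᵥ M' *ᵥ w = Δ ^ 2 / g := by
        rw [hMw, dotProduct_smul, dotProduct_comm, hzw, smul_eq_mul]
        ring
      have hkey : 2 ≤ ∑ x', ∑ a', η x' a' * (φ x' a' ⬝ᵥ w) ^ 2 := by
        set q := ∑ x', ∑ a', η x' a' * (φ x' a' ⬝ᵥ w) ^ 2 with hq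
        have hs : ∀ s : ℝ, 0 < s → 2 ≤ (1 + s) ^ 2 * q := by
          intro s hspos
          set θ'' : Fin d → ℝ := θ - (1 + s) • w with hθ''
          set f' : X → A → ℝ := fun x' a' => φ x' a' ⬝ᵥ θ'' with hf'
          have hmem : f' ∈ linClass φ := ⟨θ'', fun _ _ => rfl⟩
          have hwit : ∃ x₀, ∃ a₀, a₀ ≠ π x₀ ∧ f' x₀ (π x₀) < f' x₀ a₀ := by
            refine ⟨x, a, hax, ?_⟩
            have hd : f' x (π x) - f' x a = z ⬝ᵥ θ'' := (hzdot x a θ'').symm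
            rw [hθ'', dotProduct_sub, dotProduct_smul, hzθ, hzw, smul_eq_mul] at hd
            nlinarith [hd, hΔ, hspos]
          have h1 := hfeas f' hmem hwit
          have hdiffs : ∀ x' a', f x' a' - f' x' a' = (1 + s) * (φ x' a' ⬝ᵥ w) := by
            intro x' a'
            rw [hfd]
            simp only [hf', hθ'', dotProduct_sub, dotProduct_smul, smul_eq_mul]
            ring
          have h2 : ∑ x', ∑ a', η x' a' * (1 / 2 * (f x' a' - f' x' a') ^ 2)
              = (1 + s) ^ 2 / 2 * q := by
            rw [hq, Finset.mul_sum]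
            refine Finset.sum_congr rfl fun x' _ => ?_
            rw [Finset.mul_sum]
            refine Finset.sum_congr rfl fun a' _ => ?_
            rw [hdiffs]
            ring
          rw [h2] at h1
          linarith
        by_contra hlt
        push_neg at hlt
        have hq0 : 0 ≤ q := hqnn w
        have hss := hs ((2 - q) / 100) (by linarith)
        have hfac : 0 < (2 - q) * (q ^ 2 - 202 * q + 10000) :=
          mul_pos (by linarith) (by nlinarith [hq0, hlt, sq_nonneg q])
        nlinarith [hss, hfac]
      have hfin : Δ ^ 2 / g = w ⬝ᵥ M' *ᵥ w := hwMw.symm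
      rw [hfin, hq' w]
      have hnn2 : 0 ≤ δ * ∑ x', ∑ a', (φ x' a' ⬝ᵥ w) ^ 2 :=
        mul_nonneg hδ.le (Finset.sum_nonneg fun x' _ =>
          Finset.sum_nonneg fun a' _ => sq_nonneg _)
      linarith
    · -- the value bound
      have hval : ∑ x, ∑ a, η' x a * (f x (π x) - f x a) = R + δ * S := by
        rw [hR, hS, Finset.mul_sum, ← Finset.sum_add_distrib]
        refine Finset.sum_congr rfl fun x _ => ?_
        rw [Finset.mul_sum, ← Finset.sum_add_distrib]
        refine Finset.sum_congr rfl fun a _ => ?_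
        rw [hη']
        ring
      rw [hval]
      calc ENNReal.ofReal (R + δ * S)
          ≤ ENNReal.ofReal R + ENNReal.ofReal (δ * S) := ENNReal.ofReal_add_le
        _ ≤ ENNReal.ofReal R + ε := by
            refine add_le_add le_rfl ?_
            rw [← ENNReal.ofReal_coe_nnreal]
            refine ENNReal.ofReal_le_ofReal ?_
            rw [hδdef, div_mul_eq_mul_div, div_le_iff₀ (by linarith : (0:ℝ) < S + 1)]
            nlinarith [hS0, ε.coe_nonneg]
end
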